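/- arXiv:math/9404234 — 8 statements merged into one kernel-verified Lean document; each statement's English description precedes it below -/
import Mathlib

section
/- Every bounded sequence in a real or complex Banach space has either a weak-Cauchy subsequence or a subsequence equivalent to the standard unit vector basis of ℓ¹. -/
open Filter Topology

section Defs
variable (𝕜 : Type*) [RCLike 𝕜] {B : Type*} [NormedAddCommGroup B] [NormedSpace 𝕜 B]

/-- A sequence is weak-Cauchy if every continuous linear functional converges along it. -/
def WeakCauchy (x : ℕ → B) : Prop :=
  ∀ f : B →L[𝕜] 𝕜, ∃ l : 𝕜, Tendsto (fun n => f (x n)) atTop (𝓝 l)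

/-- A sequence converges weakly. -/
def WeaklyConvergent (x : ℕ → B) : Prop :=
  ∃ b : B, ∀ f : B →L[𝕜] 𝕜, Tendsto (fun n => f (x n)) atTop (𝓝 (f b))

/-- A basic sequence: nonzero terms with uniformly bounded basis projections. -/
def IsBasicSeq (x : ℕ → B) : Prop :=
  (∀ j, x j ≠ 0) ∧ ∃ Λ : ℝ, ∀ (c : ℕ → 𝕜) (k n : ℕ), k ≤ n →
    ‖∑ i ∈ Finset.range k, c i • x i‖ ≤ Λ * ‖∑ i ∈ Finset.range n, c i • x i‖

/-- Strongly summing (s.s.) sequence. -/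
def StronglySumming (b : ℕ → B) : Prop :=
  WeakCauchy 𝕜 b ∧ IsBasicSeq 𝕜 b ∧
    ∀ c : ℕ → 𝕜, (∃ M : ℝ, ∀ n, ‖∑ j ∈ Finset.range n, c j • b j‖ ≤ M) →
      ∃ l : 𝕜, Tendsto (fun n => ∑ j ∈ Finset.range n, c j) atTop (𝓝 l)

/-- Coefficient converging (c.c.) sequence. -/
def CoeffConverging (e : ℕ → B) : Prop :=
  IsBasicSeq 𝕜 e ∧ WeakCauchy 𝕜 (fun n => ∑ j ∈ Finset.range (n + 1), e j) ∧
    ∀ c : ℕ → 𝕜, (∃ M : ℝ, ∀ n, ‖∑ j ∈ Finset.range n, c j • e j‖ ≤ M) →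
      ∃ l : 𝕜, Tendsto c atTop (𝓝 l)

/-- `u` is a convex block basis of `b`. -/
def ConvexBlockBasis (b u : ℕ → B) : Prop :=
  ∃ (n : ℕ → ℕ) (c : ℕ → ℝ), StrictMono n ∧ (∀ i, 0 ≤ c i) ∧
    (∀ j, ∑ i ∈ Finset.Ioc (n j) (n (j + 1)), c i = 1) ∧
    ∀ j, u j = ∑ i ∈ Finset.Ioc (n j) (n (j + 1)), (c i : 𝕜) • b i

/-- `u` is equivalent to the summing basis of the space `Se` of convergent series,
whose norm of a finitely supported sequence `a` is `max_{k ≤ n} ‖∑_{i<k} a i‖`. -/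
def EquivSummingBasis (u : ℕ → B) : Prop :=
  ∃ A C : ℝ, 0 < A ∧ ∀ (n : ℕ) (a : ℕ → 𝕜),
    (∀ k ≤ n, A * ‖∑ i ∈ Finset.range k, a i‖ ≤ ‖∑ i ∈ Finset.range n, a i • u i‖) ∧
    ∃ k ≤ n, ‖∑ i ∈ Finset.range n, a i • u i‖ ≤ C * ‖∑ i ∈ Finset.range k, a i‖

/-- `x` is equivalent to the standard unit vector basis of `ℓ¹`. -/
def EquivL1Basis (x : ℕ → B) : Prop :=
  ∃ c C : ℝ, 0 < c ∧ ∀ (n : ℕ) (a : ℕ → 𝕜),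
    c * ∑ i ∈ Finset.range n, ‖a i‖ ≤ ‖∑ i ∈ Finset.range n, a i • x i‖ ∧
    ‖∑ i ∈ Finset.range n, a i • x i‖ ≤ C * ∑ i ∈ Finset.range n, ‖a i‖

end Defs

section Defs2
variable (𝕜 : Type*) [RCLike 𝕜] (B : Type*) [NormedAddCommGroup B] [NormedSpace 𝕜 B]

/-- Every weak-Cauchy sequence converges weakly. -/
def WeaklySeqComplete : Prop :=
  ∀ x : ℕ → B, WeakCauchy 𝕜 x → WeaklyConvergent 𝕜 x

/-- `c₀` (realized as `C₀(ℕ, 𝕜)`) embeds isomorphically into `B`. -/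
def ContainsC0 : Prop :=
  ∃ T : ZeroAtInftyContinuousMap ℕ 𝕜 →L[𝕜] B, ∃ c : ℝ, 0 < c ∧
    ∀ x, c * ‖x‖ ≤ ‖T x‖

end Defs2


namespace RosenthalAux

/-- Dependent-choice style recursion helper. -/
lemma seq_rec {α : Type*} (P : α → Prop) (R : α → α → Prop) (a0 : α) (h0 : P a0)
    (step : ∀ a, P a → ∃ b, P b ∧ R a b) :
    ∃ f : ℕ → α, f 0 = a0 ∧ ∀ n, P (f n) ∧ R (f n) (f (n + 1)) := by
  choose next hP hR using step
  let g : ℕ → {a : α // P a} := fun n =>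
    Nat.rec ⟨a0, h0⟩ (fun _ p => ⟨next p.1 p.2, hP p.1 p.2⟩) n
  exact ⟨fun n => (g n).1, rfl, fun n => ⟨(g n).2, hR _ _⟩⟩

lemma infinite_of_arbitrarily_large {Q : ℕ → Prop} (h : ∀ N, ∃ k, N ≤ k ∧ Q k) :
    {k | Q k}.Infinite := by
  intro hfin
  obtain ⟨b, hb⟩ := hfin.bddAbove
  obtain ⟨k, hk, hQ⟩ := h (b + 1)
  exact absurd (hb hQ) (by omega)

section NW

variable (Fam : Finset ℕ → Prop)

def InitSeg (F : Finset ℕ) (X : Set ℕ) : Prop :=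
  ↑F ⊆ X ∧ ∀ a ∈ X, a ∉ F → ∀ b ∈ F, b < a

def Uo (X : Set ℕ) : Prop := ∃ F, Fam F ∧ InitSeg F X

def Above (s : Finset ℕ) (M : Set ℕ) : Set ℕ := {a | a ∈ M ∧ ∀ b ∈ s, b < a}

def Accepts (s : Finset ℕ) (M : Set ℕ) : Prop :=
  ∀ X ⊆ Above s M, X.Infinite → Uo Fam (↑s ∪ X)

def Rejects (s : Finset ℕ) (M : Set ℕ) : Prop :=
  ∀ X ⊆ M, X.Infinite → ¬ Accepts Fam s X

variable {Fam}

lemma Above_mono {s : Finset ℕ} {M M' : Set ℕ} (h : M ⊆ M') : Above s M ⊆ Above s M' :=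
  fun a ha => ⟨h ha.1, ha.2⟩

lemma Above_infinite {s : Finset ℕ} {M : Set ℕ} (hM : M.Infinite) : (Above s M).Infinite := by
  have : M \ {a | ∃ b ∈ s, a ≤ b} ⊆ Above s M := by
    intro a ha
    refine ⟨ha.1, fun b hb => ?_⟩
    by_contra hba
    exact ha.2 ⟨b, hb, by omega⟩
  refine Set.Infinite.mono this (hM.diff ?_)
  apply Set.Finite.subset (Set.finite_Iic (s.sup id))
  rintro a ⟨b, hb, hab⟩
  exact le_trans hab (Finset.le_sup (f := id) hb)

lemma accepts_mono {s : Finset ℕ} {M M' : Set ℕ} (h : M ⊆ M')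
    (ha : Accepts Fam s M') : Accepts Fam s M :=
  fun X hX hXi => ha X (hX.trans (Above_mono h)) hXi

lemma rejects_mono {s : Finset ℕ} {M M' : Set ℕ} (h : M ⊆ M')
    (hr : Rejects Fam s M') : Rejects Fam s M :=
  fun X hX hXi => hr X (hX.trans h) hXi

lemma exists_accepts_or_rejects (s : Finset ℕ) (M : Set ℕ) (hM : M.Infinite) :
    ∃ X, X ⊆ M ∧ X.Infinite ∧ (Accepts Fam s X ∨ Rejects Fam s X) := by
  by_cases h : Rejects Fam s M
  · exact ⟨M, le_refl _, hM, Or.inr h⟩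
  · simp only [Rejects, not_forall] at h
    obtain ⟨X, hX, hXi, hacc⟩ := h
    exact ⟨X, hX, hXi, Or.inl (not_not.mp hacc)⟩

lemma sInf_mem_of_infinite {X : Set ℕ} (hX : X.Infinite) : sInf X ∈ X :=
  Nat.sInf_mem hX.nonempty

lemma step3 {s : Finset ℕ} {M : Set ℕ} (hM : M.Infinite) (hrej : Rejects Fam s M) :
    ∃ X ⊆ M, X.Infinite ∧ ∀ a ∈ X, Rejects Fam (insert a s) X := by
  classical
  -- iterate the dichotomy
  obtain ⟨f, hf0, hf⟩ := seq_rec (fun X : Set ℕ => X ⊆ M ∧ X.Infinite)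
    (fun X Y => Y ⊆ X ∧ (∀ y ∈ Y, sInf X < y) ∧
      (Accepts Fam (insert (sInf X) s) Y ∨ Rejects Fam (insert (sInf X) s) Y))
    M ⟨le_refl _, hM⟩
    (by
      rintro X ⟨hXM, hXi⟩
      obtain ⟨Y, hY, hYi, hacc⟩ := exists_accepts_or_rejects (Fam := Fam)
        (insert (sInf X) s) (X ∩ Set.Ioi (sInf X))
        (by
          have : X \ Set.Iic (sInf X) ⊆ X ∩ Set.Ioi (sInf X) := by
            intro a ha; exact ⟨ha.1, by simpa using ha.2⟩
          exact (hXi.diff (Set.finite_Iic _)).mono this)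
      refine ⟨Y, ⟨(hY.trans Set.inter_subset_left).trans hXM, hYi⟩,
        hY.trans Set.inter_subset_left, fun y hy => (hY hy).2, hacc⟩)
  set a : ℕ → ℕ := fun n => sInf (f n) with ha
  have hfM : ∀ n, f n ⊆ M := fun n => ((hf n).1).1
  have hfi : ∀ n, (f n).Infinite := fun n => ((hf n).1).2
  have hstep : ∀ n, f (n + 1) ⊆ f n := fun n => ((hf n).2).1
  have hgt : ∀ n, ∀ y ∈ f (n + 1), a n < y := fun n => ((hf n).2).2.1
  have hchain : ∀ {n m : ℕ}, n ≤ m → f m ⊆ f n := by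
    intro n m h
    induction m with
    | zero => simp_all
    | succ m ih =>
      rcases Nat.lt_or_ge n (m + 1) with h' | h'
      · exact (hstep m).trans (ih (by omega))
      · have : n = m + 1 := by omega
        subst this; exact le_refl _
  have haMem : ∀ n, a n ∈ f n := fun n => sInf_mem_of_infinite (hfi n)
  have hamono : StrictMono a := by
    apply strictMono_nat_of_lt_succ
    intro n
    exact hgt n _ (haMem (n + 1))
  have haM : ∀ n, a n ∈ M := fun n => hfM n (haMem n)
  have hmemf : ∀ {n m : ℕ}, n < m → a m ∈ f (n + 1) := fun {n m} h =>
    hchain (by omega : n + 1 ≤ m) (haMem m)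
  by_cases hAcc : {n | Accepts Fam (insert (a n) s) (f (n + 1))}.Infinite
  · -- contradiction with rejection of s
    exfalso
    set Y : Set ℕ := a '' {n | Accepts Fam (insert (a n) s) (f (n + 1))} with hY
    have hYM : Y ⊆ M := by rintro y ⟨n, _, rfl⟩; exact haM n
    have hYi : Y.Infinite := hAcc.image (Set.injOn_of_injective hamono.injective)
    refine hrej Y hYM hYi ?_
    intro Z hZ hZi
    have hcZ : sInf Z ∈ Z := sInf_mem_of_infinite hZi
    obtain ⟨m, hm, hmc⟩ := hZ hcZ |>.1
    set c := sInf Z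
    have hZ' : Z ∩ Set.Ioi c ⊆ Above (insert c s) (f (m + 1)) := by
      intro z hz
      obtain ⟨k, hk, hkz⟩ := (hZ hz.1).1
      have hzc : c < z := hz.2
      have hkm : m < k := by
        by_contra hkm
        have : z ≤ c := by
          rcases Nat.lt_or_ge k m with h' | h'
          · rw [← hkz, ← hmc]; exact le_of_lt (hamono h')
          · have : k = m := by omega
            rw [← hkz, this, hmc]
        omega
      refine ⟨hkz ▸ hmemf hkm, ?_⟩
      intro b hb
      rcases Finset.mem_insert.mp hb with rfl | hb
      · exact hzc
      · exact (hZ hz.1).2 b hb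
    have hZ'i : (Z ∩ Set.Ioi c).Infinite := by
      have : Z \ Set.Iic c ⊆ Z ∩ Set.Ioi c := by
        intro z hz; exact ⟨hz.1, by simpa using hz.2⟩
      exact (hZi.diff (Set.finite_Iic _)).mono this
    have hZ'' : Z ∩ Set.Ioi c ⊆ Above (insert (a m) s) (f (m + 1)) := by rw [hmc]; exact hZ'
    have := hm (Z ∩ Set.Ioi c) hZ'' hZ'i
    have hset : (↑(insert c s) : Set ℕ) ∪ (Z ∩ Set.Ioi c) = ↑s ∪ Z := by
      ext t
      simp only [Finset.coe_insert, Set.mem_union, Set.mem_insert_iff, Set.mem_inter_iff,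
        Set.mem_Ioi, Finset.mem_coe]
      constructor
      · rintro (( rfl | h) | ⟨h, _⟩)
        · exact Or.inr hcZ
        · exact Or.inl h
        · exact Or.inr h
      · rintro (h | h)
        · exact Or.inl (Or.inr h)
        · rcases Nat.lt_or_ge c t with h' | h'
          · exact Or.inr ⟨h, h'⟩
          · have : t = c := le_antisymm (by omega) (Nat.sInf_le h)
            exact Or.inl (Or.inl this)
    rw [hmc] at this
    rwa [hset] at this
  · -- cofinal rejections
    rw [Set.not_infinite] at hAcc
    have hbdd := hAcc.bddAbove
    obtain ⟨N, hN⟩ := hbdd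
    have hrejn : ∀ n, N + 1 ≤ n → Rejects Fam (insert (a n) s) (f (n + 1)) := by
      intro n hn
      rcases ((hf n).2).2.2 with hA | hR
      · exact absurd (hN hA) (by omega)
      · exact hR
    set X : Set ℕ := a '' {n | N + 1 ≤ n} with hX
    have hXM : X ⊆ M := by rintro y ⟨n, _, rfl⟩; exact haM n
    have hXi : X.Infinite := by
      have : {n | N + 1 ≤ n} = Set.Ici (N + 1) := rfl
      rw [hX, this]
      exact Set.Infinite.image (Set.injOn_of_injective hamono.injective) (Set.Ici_infinite _)
    refine ⟨X, hXM, hXi, ?_⟩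
    rintro y ⟨n, hn, rfl⟩
    intro W hW hWi hAW
    have hW' : W ∩ Set.Ioi (a n) ⊆ f (n + 1) := by
      rintro w ⟨hw, hwgt⟩
      obtain ⟨k, hk, rfl⟩ := hW hw
      have : n < k := by
        by_contra hnk
        have : a k ≤ a n := hamono.le_iff_le.mpr (by omega)
        simp only [Set.mem_Ioi] at hwgt; omega
      exact hmemf this
    have hW'i : (W ∩ Set.Ioi (a n)).Infinite := by
      have : W \ Set.Iic (a n) ⊆ W ∩ Set.Ioi (a n) := by
        intro z hz; exact ⟨hz.1, by simpa using hz.2⟩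
      exact (hWi.diff (Set.finite_Iic _)).mono this
    exact hrejn n hn (W ∩ Set.Ioi (a n)) hW' hW'i
      (accepts_mono Set.inter_subset_left hAW)

lemma multi3 (𝒮 : Finset (Finset ℕ)) {M : Set ℕ} (hM : M.Infinite)
    (h : ∀ s ∈ 𝒮, Rejects Fam s M) :
    ∃ X ⊆ M, X.Infinite ∧ ∀ s ∈ 𝒮, ∀ a ∈ X, Rejects Fam (insert a s) X := by
  classical
  induction 𝒮 using Finset.induction_on generalizing M with
  | empty => exact ⟨M, le_refl _, hM, by simp⟩
  | insert _ _ hnotmem ih =>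
    rename_i s₀ 𝒮'
    obtain ⟨X, hXM, hXi, hX⟩ := ih hM (fun s hs => h s (Finset.mem_insert_of_mem hs))
    obtain ⟨X', hX'X, hX'i, hX'⟩ := step3 hXi
      (rejects_mono hXM (h s₀ (Finset.mem_insert_self _ _)))
    refine ⟨X', hX'X.trans hXM, hX'i, ?_⟩
    intro s hs a haX'
    rcases Finset.mem_insert.mp hs with rfl | hs
    · exact hX' a haX'
    · exact rejects_mono hX'X (hX s hs a (hX'X haX'))

theorem nash_williams (Fam : Finset ℕ → Prop) : ∃ M : Set ℕ, M.Infinite ∧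
    ((∀ X ⊆ M, X.Infinite → Uo Fam X) ∨ (∀ X ⊆ M, X.Infinite → ¬ Uo Fam X)) := by
  classical
  obtain ⟨X₀, _, hX₀i, hd⟩ := exists_accepts_or_rejects (Fam := Fam) ∅ Set.univ
    Set.infinite_univ
  rcases hd with hacc | hrej
  · refine ⟨X₀, hX₀i, Or.inl ?_⟩
    intro Y hY hYi
    have : Y ⊆ Above ∅ X₀ := fun y hy => ⟨hY hy, by simp⟩
    have := hacc Y this hYi
    simpa using this
  · -- build the rejecting sequence
    obtain ⟨f, hf0, hf⟩ := seq_rec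
      (fun p : Finset ℕ × Set ℕ => p.2.Infinite ∧ (∀ s ⊆ p.1, Rejects Fam s p.2) ∧
        (∀ x ∈ p.2, ∀ y ∈ p.1, y < x))
      (fun p q => p.1 ⊂ q.1)
      (∅, X₀)
      ⟨hX₀i, fun s hs => by
        rw [Finset.subset_empty.mp hs]; exact hrej, by simp⟩
      (by
        rintro ⟨F, M⟩ ⟨hMi, hrejF, hord⟩
        obtain ⟨X, hXM, hXi, hX⟩ := multi3 F.powerset hMi
          (fun s hs => hrejF s (Finset.mem_powerset.mp hs))
        set a := sInf X with ha
        have haX : a ∈ X := sInf_mem_of_infinite hXi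
        have hanotF : a ∉ F := fun haF => lt_irrefl a (hord a (hXM haX) a haF)
        refine ⟨(insert a F, X ∩ Set.Ioi a), ⟨?_, ?_, ?_⟩, Finset.ssubset_insert hanotF⟩
        · have : X \ Set.Iic a ⊆ X ∩ Set.Ioi a := by
            intro z hz; exact ⟨hz.1, by simpa using hz.2⟩
          exact (hXi.diff (Set.finite_Iic _)).mono this
        · intro t ht
          by_cases hat : a ∈ t
          · have h1 : t.erase a ⊆ F := by
              intro b hb
              have := ht (Finset.mem_of_mem_erase hb)
              rcases Finset.mem_insert.mp this with rfl | h
              · exact absurd rfl (Finset.ne_of_mem_erase hb)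
              · exact h
            have := hX (t.erase a) (Finset.mem_powerset.mpr h1) a haX
            rw [Finset.insert_erase hat] at this
            exact rejects_mono Set.inter_subset_left this
          · have h1 : t ⊆ F := by
              intro b hb
              rcases Finset.mem_insert.mp (ht hb) with rfl | h
              · exact absurd hb hat
              · exact h
            exact rejects_mono (Set.inter_subset_left.trans hXM) (hrejF t h1)
        · rintro x ⟨hxX, hxa⟩ y hy
          rcases Finset.mem_insert.mp hy with rfl | hy
          · exact hxa
          · exact hord x (hXM hxX) y hy)
    -- the diagonal set
    have hmono : ∀ {n m : ℕ}, n ≤ m → (f n).1 ⊆ (f m).1 := by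
      intro n m h
      induction m with
      | zero => simp_all
      | succ m ih =>
        rcases Nat.lt_or_ge n (m + 1) with h' | h'
        · exact (ih (by omega)).trans (subset_of_ssubset (hf m).2)
        · have : n = m + 1 := by omega
          subst this; exact Finset.Subset.refl _
    have hcard : ∀ n, n ≤ (f n).1.card := by
      intro n
      induction n with
      | zero => omega
      | succ n ih => have := Finset.card_lt_card (hf n).2; omega
    set M : Set ℕ := ⋃ n, ↑(f n).1 with hMdef
    have hMi : M.Infinite := by
      intro hfin
      have : ∀ n, (f n).1 ⊆ hfin.toFinset := by
        intro n x hx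
        rw [Set.Finite.mem_toFinset]
        exact Set.mem_iUnion.mpr ⟨n, hx⟩
      have h1 := Finset.card_le_card (this (hfin.toFinset.card + 1))
      have h2 := hcard (hfin.toFinset.card + 1)
      omega
    refine ⟨M, hMi, Or.inr ?_⟩
    rintro X hXM hXi ⟨F, hFam, hFinit⟩
    -- F is contained in some (f k).1
    have hFsub : ∃ k, ↑F ⊆ ↑(f k).1 := by
      have : ∀ x ∈ F, ∃ k, x ∈ (f k).1 := by
        intro x hx
        have := hXM (hFinit.1 hx)
        rw [hMdef] at this
        obtain ⟨t, ht⟩ := Set.mem_iUnion.mp this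
        exact ⟨t, by exact_mod_cast ht⟩
      choose g hg using this
      classical
      refine ⟨F.sup (fun x => if hx : x ∈ F then g x hx else 0), ?_⟩
      intro x hx
      have hxF : x ∈ F := by exact_mod_cast hx
      have hle : g x hxF ≤ F.sup (fun y => if hy : y ∈ F then g y hy else 0) := by
        have := Finset.le_sup (f := fun y => if hy : y ∈ F then g y hy else 0) hxF
        simpa [hxF] using this
      exact_mod_cast hmono hle (hg x hxF)
    obtain ⟨k, hk⟩ := hFsub
    have hrejF : Rejects Fam F (f k).2 := ((hf k).1).2.1 F (by exact_mod_cast hk)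
    refine hrejF (f k).2 (le_refl _) ((hf k).1).1 ?_
    intro Z hZ hZi
    refine ⟨F, hFam, ?_, ?_⟩
    · exact Set.subset_union_left
    · intro b hb hbF c hcF
      rcases hb with hb | hb
      · exact absurd hb hbF
      · exact (hZ hb).2 c hcF

end NW

section Pairs

variable {S : Type*} (A B : ℕ → Set S)

/-- Alternating-parity intersection over a finite set of indices. -/
def altF (F : Finset ℕ) : Set S :=
  ⋂ x ∈ F, (if (F.filter (· < x)).card % 2 = 0 then A x else B x)

def Indep : Prop :=
  ∀ (n : ℕ) (E : Set ℕ), ∃ t : S, ∀ j < n, (j ∈ E → t ∈ B j) ∧ (j ∉ E → t ∈ A j)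

def Conv : Prop :=
  ∀ t : S, ¬ ({n | t ∈ A n}.Infinite ∧ {n | t ∈ B n}.Infinite)

variable {A B}

/-- An initial segment of the range of a strictly monotone map is an image of an
initial interval. -/
lemma initSeg_range_strictMono {g : ℕ → ℕ} (hg : StrictMono g) {F : Finset ℕ}
    (hF : InitSeg F (Set.range g)) : ∃ k, F = Finset.image g (Finset.range k) := by
  classical
  by_cases hFe : F = ∅
  · exact ⟨0, by simp [hFe]⟩
  have hmax := Finset.max'_mem F (Finset.nonempty_iff_ne_empty.mpr hFe)
  set J : Finset ℕ := (Finset.range (F.max' (Finset.nonempty_iff_ne_empty.mpr hFe) + 1)).filter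
    (fun j => g j ∈ F) with hJ
  have hFJ : F = J.image g := by
    ext x
    simp only [hJ, Finset.mem_image, Finset.mem_filter, Finset.mem_range]
    constructor
    · intro hx
      obtain ⟨j, hj⟩ := hF.1 hx
      refine ⟨j, ⟨?_, hj ▸ hx⟩, hj⟩
      have hjg : j ≤ g j := hg.le_apply
      have : g j ≤ F.max' _ := Finset.le_max' _ _ (hj ▸ hx)
      omega
    · rintro ⟨j, ⟨_, hjF⟩, rfl⟩
      exact hjF
  have hdc : ∀ j j', j' ≤ j → j ∈ J → j' ∈ J := by
    intro j j' hle hj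
    simp only [hJ, Finset.mem_filter, Finset.mem_range] at hj ⊢
    have hgle : g j' ≤ g j := hg.monotone hle
    constructor
    · omega
    · by_contra hgF
      have := hF.2 (g j') ⟨j', rfl⟩ hgF (g j) hj.2
      omega
  have hJr : J = Finset.range J.card := by
    have hsub : J ⊆ Finset.range J.card := by
      intro j hj
      have : Finset.range (j + 1) ⊆ J := by
        intro i hi
        exact hdc j i (by simpa using Nat.lt_succ_iff.mp (Finset.mem_range.mp hi)) hj
      have := Finset.card_le_card this
      simp only [Finset.card_range] at this
      simp only [Finset.mem_range]
      omega
    exact Finset.eq_of_subset_of_card_le hsub (by simp)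
  exact ⟨J.card, hFJ.trans (by rw [← hJr])⟩

lemma count_image_strictMono {g : ℕ → ℕ} (hg : StrictMono g) {k j : ℕ} (hj : j < k) :
    ((Finset.image g (Finset.range k)).filter (· < g j)).card = j := by
  classical
  have : (Finset.image g (Finset.range k)).filter (· < g j) =
      Finset.image g (Finset.range j) := by
    ext x
    simp only [Finset.mem_filter, Finset.mem_image, Finset.mem_range]
    constructor
    · rintro ⟨⟨i, hi, rfl⟩, hlt⟩
      exact ⟨i, hg.lt_iff_lt.mp hlt, rfl⟩
    · rintro ⟨i, hij, rfl⟩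
      exact ⟨⟨i, by omega, rfl⟩, hg hij⟩
  rw [this, Finset.card_image_of_injective _ hg.injective, Finset.card_range]

theorem rosenthal_pairs (A B : ℕ → Set S) :
    ∃ φ : ℕ → ℕ, StrictMono φ ∧ (Indep (A ∘ φ) (B ∘ φ) ∨ Conv (A ∘ φ) (B ∘ φ)) := by
  classical
  obtain ⟨M, hMi, hM⟩ := nash_williams (fun F => altF A B F = ∅)
  have hMs : {n | n ∈ M}.Infinite := hMi
  set m : ℕ → ℕ := Nat.nth (· ∈ M) with hm
  have hmmono : StrictMono m := Nat.nth_strictMono hMs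
  have hmM : ∀ k, m k ∈ M := Nat.nth_mem_of_infinite hMs
  rcases hM with hall | hnone
  · -- convergent case, along m itself
    refine ⟨m, hmmono, Or.inr ?_⟩
    rintro t ⟨hA, hB⟩
    -- build an alternating subsequence
    obtain ⟨e, he0, he⟩ := seq_rec
      (fun p : ℕ × ℕ => (p.1 % 2 = 0 → t ∈ A (m p.2)) ∧ (p.1 % 2 = 1 → t ∈ B (m p.2)))
      (fun p q => q.1 = p.1 + 1 ∧ p.2 < q.2)
      (0, sInf {n | t ∈ A (m n)})
      (by
        constructor
        · intro _
          exact Nat.sInf_mem hA.nonempty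
        · intro h; omega)
      (by
        rintro ⟨k, v⟩ ⟨h0, h1⟩
        by_cases hpar : (k + 1) % 2 = 0
        · obtain ⟨w, hw, hvw⟩ := Set.Infinite.exists_gt hA v
          exact ⟨(k + 1, w), ⟨fun _ => hw, fun h => by omega⟩, rfl, hvw⟩
        · obtain ⟨w, hw, hvw⟩ := Set.Infinite.exists_gt hB v
          exact ⟨(k + 1, w), ⟨fun h => by omega, fun _ => hw⟩, rfl, hvw⟩)
    have hefst : ∀ n, (e n).1 = n := by
      intro n
      induction n with
      | zero => rw [he0]
      | succ n ih => rw [(he n).2.1, ih]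
    have hemono : StrictMono (fun n => (e n).2) := strictMono_nat_of_lt_succ fun n => (he n).2.2
    set g : ℕ → ℕ := fun n => m ((e n).2) with hg
    have hgmono : StrictMono g := hmmono.comp hemono
    have hX : Set.range g ⊆ M := by rintro x ⟨n, rfl⟩; exact hmM _
    have hXi : (Set.range g).Infinite := Set.infinite_range_of_injective hgmono.injective
    obtain ⟨F, hFam, hFinit⟩ := hall (Set.range g) hX hXi
    obtain ⟨k, rfl⟩ := initSeg_range_strictMono hgmono hFinit
    -- t belongs to altF of this set
    have htmem : t ∈ altF A B (Finset.image g (Finset.range k)) := by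
      simp only [altF, Set.mem_iInter]
      intro x hx
      obtain ⟨j, hjk, rfl⟩ := by
        simpa only [Finset.mem_image, Finset.mem_range] using hx
      rw [count_image_strictMono hgmono hjk]
      have hj := (he j).1
      rw [hefst j] at hj
      by_cases hpar : j % 2 = 0
      · simpa [hpar] using hj.1 hpar
      · have hone : j % 2 = 1 := by omega
        simp only [hone]
        simpa [hone] using hj.2 hone
    rw [hFam] at htmem
    exact htmem
  · -- independent case, along odd positions
    have hkey : ∀ F : Finset ℕ, ↑F ⊆ M → altF A B F ≠ ∅ := by
      intro F hFM hFam
      set X : Set ℕ := ↑F ∪ (M ∩ Set.Ioi (F.sup id)) with hXdef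
      have hXM : X ⊆ M := by
        rintro x (hx | hx)
        · exact hFM hx
        · exact hx.1
      have hXi : X.Infinite := by
        apply Set.Infinite.mono (Set.subset_union_right)
        have : M \ Set.Iic (F.sup id) ⊆ M ∩ Set.Ioi (F.sup id) := by
          intro z hz; exact ⟨hz.1, by simpa using hz.2⟩
        exact (hMi.diff (Set.finite_Iic _)).mono this
      refine hnone X hXM hXi ⟨F, hFam, Set.subset_union_left, ?_⟩
      rintro b (hb | hb) hbF c hcF
      · exact absurd hb hbF
      · exact lt_of_le_of_lt (Finset.le_sup (f := id) hcF) hb.2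
    refine ⟨fun j => m (2 * j + 1), fun i j hij => hmmono (by omega), Or.inl ?_⟩
    intro n E
    -- desired parity for index j
    set d : ℕ → ℕ := fun j => if j ∈ E then 1 else 0 with hd
    -- build the finite pattern with fillers
    set Fs : ℕ → Finset ℕ := fun n => Nat.rec ∅
      (fun j Fj => Fj ∪ (if Fj.card % 2 = d j then {m (2 * j + 1)}
        else {m (2 * j), m (2 * j + 1)})) n with hFs
    have hFs_succ : ∀ j, Fs (j + 1) = Fs j ∪ (if (Fs j).card % 2 = d j then {m (2 * j + 1)}
        else {m (2 * j), m (2 * j + 1)}) := fun j => rfl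
    have hFsM : ∀ j, ↑(Fs j) ⊆ M := by
      intro j
      induction j with
      | zero => simp [hFs]
      | succ j ih =>
        rw [hFs_succ]
        push_cast
        refine Set.union_subset ih ?_
        split
        · intro x hx
          simp only [Finset.coe_singleton, Set.mem_singleton_iff] at hx
          subst hx; exact hmM _
        · intro x hx
          simp only [Finset.coe_insert, Finset.coe_singleton, Set.mem_insert_iff,
            Set.mem_singleton_iff] at hx
          rcases hx with rfl | rfl <;> exact hmM _
    have hFslt : ∀ j, ∀ x ∈ Fs j, x < m (2 * j) := by
      intro j
      induction j with
      | zero => simp [hFs]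
      | succ j ih =>
        intro x hx
        rw [hFs_succ] at hx
        have h1 : m (2 * j) < m (2 * (j + 1)) := hmmono (by omega)
        have h2 : m (2 * j + 1) < m (2 * (j + 1)) := hmmono (by omega)
        rcases Finset.mem_union.mp hx with hx | hx
        · exact lt_trans (ih x hx) h1
        · split at hx <;> simp_all <;> rcases hx with rfl | rfl <;> omega
    -- the filter of elements below m (2j+1) stabilizes with correct parity
    have hcount : ∀ j, ∀ n, j < n →
        m (2 * j + 1) ∈ Fs n ∧ ((Fs n).filter (· < m (2 * j + 1))).card % 2 = d j := by
      intro j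
      have base : m (2 * j + 1) ∈ Fs (j + 1) ∧
          ((Fs (j + 1)).filter (· < m (2 * j + 1))).card % 2 = d j := by
        constructor
        · rw [hFs_succ]
          apply Finset.mem_union_right
          split <;> simp
        · rw [hFs_succ]
          have hdisj : ∀ y ∈ Fs j, y < m (2 * j + 1) := by
            intro y hy
            exact lt_trans (hFslt j y hy) (hmmono (by omega))
          by_cases hc : (Fs j).card % 2 = d j
          · rw [if_pos hc]
            have : (Fs j ∪ {m (2 * j + 1)}).filter (· < m (2 * j + 1)) = Fs j := by
              ext y
              simp only [Finset.mem_filter, Finset.mem_union, Finset.mem_singleton]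
              constructor
              · rintro ⟨hy | rfl, hlt⟩
                · exact hy
                · omega
              · intro hy
                exact ⟨Or.inl hy, hdisj y hy⟩
            rw [this]; exact hc
          · rw [if_neg hc]
            have hne : m (2 * j) ∉ Fs j := fun h => lt_irrefl _ (hFslt j _ h)
            have : (Fs j ∪ {m (2 * j), m (2 * j + 1)}).filter (· < m (2 * j + 1)) =
                insert (m (2 * j)) (Fs j) := by
              ext y
              simp only [Finset.mem_filter, Finset.mem_union, Finset.mem_insert,
                Finset.mem_singleton]
              have hlt1 : m (2 * j) < m (2 * j + 1) := hmmono (by omega)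
              constructor
              · rintro ⟨hy | (rfl | rfl), hlt⟩
                · exact Or.inr hy
                · exact Or.inl rfl
                · omega
              · rintro (rfl | hy)
                · exact ⟨Or.inr (Or.inl rfl), hlt1⟩
                · exact ⟨Or.inl hy, hdisj y hy⟩
            rw [this, Finset.card_insert_of_notMem hne]
            have hdj : d j = 0 ∨ d j = 1 := by by_cases hjE : j ∈ E <;> simp [hd, hjE]
            omega
      intro n hn
      induction n with
      | zero => omega
      | succ n ih =>
        rcases Nat.lt_or_ge j n with h' | h'
        · obtain ⟨hmem, hpar⟩ := ih h'
          rw [hFs_succ]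
          have hgt : ∀ y ∈ (if (Fs n).card % 2 = d n then ({m (2 * n + 1)} : Finset ℕ)
              else {m (2 * n), m (2 * n + 1)}), ¬ y < m (2 * j + 1) := by
            intro y hy
            have h1 : m (2 * j + 1) < m (2 * n) := hmmono (by omega)
            have h2 : m (2 * j + 1) < m (2 * n + 1) := hmmono (by omega)
            split at hy
            · simp only [Finset.mem_singleton] at hy
              subst hy; omega
            · simp only [Finset.mem_insert, Finset.mem_singleton] at hy
              rcases hy with rfl | rfl <;> omega
          constructor
          · exact Finset.mem_union_left _ hmem
          · have : (Fs n ∪ (if (Fs n).card % 2 = d n then ({m (2 * n + 1)} : Finset ℕ)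
                else {m (2 * n), m (2 * n + 1)})).filter (· < m (2 * j + 1)) =
                (Fs n).filter (· < m (2 * j + 1)) := by
              ext y
              simp only [Finset.mem_filter, Finset.mem_union]
              constructor
              · rintro ⟨hy | hy, hlt⟩
                · exact ⟨hy, hlt⟩
                · exact absurd hlt (hgt y hy)
              · rintro ⟨hy, hlt⟩
                exact ⟨Or.inl hy, hlt⟩
            rw [this]; exact hpar
        · have : j = n := by omega
          subst this
          exact base
    have hne := hkey (Fs n) (hFsM n)
    obtain ⟨t, ht⟩ := Set.nonempty_iff_ne_empty.mpr hne
    refine ⟨t, fun j hj => ?_⟩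
    obtain ⟨hmem, hpar⟩ := hcount j n hj
    have htx : t ∈ (if ((Fs n).filter (· < m (2 * j + 1))).card % 2 = 0
        then A (m (2 * j + 1)) else B (m (2 * j + 1))) := by
      rw [altF] at ht
      simp only [Set.mem_iInter] at ht
      exact ht (m (2 * j + 1)) hmem
    constructor
    · intro hjE
      have : d j = 1 := by simp [hd, hjE]
      rw [hpar, this] at htx
      simpa using htx
    · intro hjE
      have : d j = 0 := by simp [hd, hjE]
      rw [hpar, this] at htx
      simpa using htx

end Pairs

section Quarter

variable {𝕜 : Type*} [RCLike 𝕜]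

lemma norm_le_abs_re_add_abs_im (a : 𝕜) : ‖a‖ ≤ |RCLike.re a| + |RCLike.im a| := by
  conv_lhs => rw [← RCLike.re_add_im a]
  refine (norm_add_le _ _).trans ?_
  rw [norm_mul, RCLike.norm_ofReal, RCLike.norm_ofReal]
  have hI : ‖(RCLike.I : 𝕜)‖ ≤ 1 := by
    by_cases h : (RCLike.I : 𝕜) = 0
    · simp [h]
    · rw [RCLike.norm_I_of_ne_zero h]
  nlinarith [abs_nonneg (RCLike.im a)]

lemma quarter (n : ℕ) (a : ℕ → 𝕜) :
    ∃ E : Finset ℕ, E ⊆ Finset.range n ∧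
      ∑ i ∈ Finset.range n, ‖a i‖ ≤ 4 * ‖∑ i ∈ E, a i‖ := by
  classical
  by_contra hcon
  push_neg at hcon
  set T := Finset.range n with hT
  set σ := ∑ i ∈ T, ‖a i‖ with hσ
  have h1 : σ ≤ ∑ i ∈ T, (|RCLike.re (a i)| + |RCLike.im (a i)|) :=
    Finset.sum_le_sum (fun i _ => norm_le_abs_re_add_abs_im _)
  have h2 : ∑ i ∈ T, (|RCLike.re (a i)| + |RCLike.im (a i)|) =
      ∑ i ∈ T, |RCLike.re (a i)| + ∑ i ∈ T, |RCLike.im (a i)| :=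
    Finset.sum_add_distrib
  set P1 := T.filter (fun i => 0 ≤ RCLike.re (a i)) with hP1
  set P2 := T.filter (fun i => ¬ 0 ≤ RCLike.re (a i)) with hP2
  set Q1 := T.filter (fun i => 0 ≤ RCLike.im (a i)) with hQ1
  set Q2 := T.filter (fun i => ¬ 0 ≤ RCLike.im (a i)) with hQ2
  have hre : ∑ i ∈ T, |RCLike.re (a i)| ≤ ‖∑ i ∈ P1, a i‖ + ‖∑ i ∈ P2, a i‖ := by
    rw [← Finset.sum_filter_add_sum_filter_not T (fun i => 0 ≤ RCLike.re (a i))]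
    have e1 : ∑ i ∈ P1, |RCLike.re (a i)| = RCLike.re (∑ i ∈ P1, a i) := by
      rw [map_sum]
      exact Finset.sum_congr rfl (fun i hi => abs_of_nonneg (Finset.mem_filter.mp hi).2)
    have e2 : ∑ i ∈ P2, |RCLike.re (a i)| = - RCLike.re (∑ i ∈ P2, a i) := by
      rw [map_sum, ← Finset.sum_neg_distrib]
      exact Finset.sum_congr rfl (fun i hi => abs_of_neg (by
        have := (Finset.mem_filter.mp hi).2; linarith [lt_of_not_ge this]))
    rw [e1, e2]
    have := RCLike.abs_re_le_norm (∑ i ∈ P1, a i)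
    have := RCLike.abs_re_le_norm (∑ i ∈ P2, a i)
    have h3 := abs_le.mp ‹|RCLike.re (∑ i ∈ P1, a i)| ≤ _›
    have h4 := abs_le.mp ‹|RCLike.re (∑ i ∈ P2, a i)| ≤ _›
    linarith [h3.2, h4.1]
  have him : ∑ i ∈ T, |RCLike.im (a i)| ≤ ‖∑ i ∈ Q1, a i‖ + ‖∑ i ∈ Q2, a i‖ := by
    rw [← Finset.sum_filter_add_sum_filter_not T (fun i => 0 ≤ RCLike.im (a i))]
    have e1 : ∑ i ∈ Q1, |RCLike.im (a i)| = RCLike.im (∑ i ∈ Q1, a i) := by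
      rw [map_sum]
      exact Finset.sum_congr rfl (fun i hi => abs_of_nonneg (Finset.mem_filter.mp hi).2)
    have e2 : ∑ i ∈ Q2, |RCLike.im (a i)| = - RCLike.im (∑ i ∈ Q2, a i) := by
      rw [map_sum, ← Finset.sum_neg_distrib]
      exact Finset.sum_congr rfl (fun i hi => abs_of_neg (by
        have := (Finset.mem_filter.mp hi).2; linarith [lt_of_not_ge this]))
    rw [e1, e2]
    have := RCLike.abs_im_le_norm (∑ i ∈ Q1, a i)
    have := RCLike.abs_im_le_norm (∑ i ∈ Q2, a i)
    have h3 := abs_le.mp ‹|RCLike.im (∑ i ∈ Q1, a i)| ≤ _›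
    have h4 := abs_le.mp ‹|RCLike.im (∑ i ∈ Q2, a i)| ≤ _›
    linarith [h3.2, h4.1]
  have c1 := hcon P1 (Finset.filter_subset _ _)
  have c2 := hcon P2 (Finset.filter_subset _ _)
  have c3 := hcon Q1 (Finset.filter_subset _ _)
  have c4 := hcon Q2 (Finset.filter_subset _ _)
  linarith

end Quarter

end RosenthalAux


/-- Every bounded sequence in a real or complex Banach space has either a weak-Cauchy
subsequence or a subsequence equivalent to the standard ℓ¹-basis. -/
theorem rosenthal_l1_theorem {𝕜 : Type*} [RCLike 𝕜] {B : Type*} [NormedAddCommGroup B]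
    [NormedSpace 𝕜 B] [CompleteSpace B] (x : ℕ → B) (hx : ∃ M : ℝ, ∀ n, ‖x n‖ ≤ M) :
    (∃ φ : ℕ → ℕ, StrictMono φ ∧ WeakCauchy 𝕜 (x ∘ φ)) ∨
    (∃ φ : ℕ → ℕ, StrictMono φ ∧ EquivL1Basis 𝕜 (x ∘ φ)) := by
  classical
  open RosenthalAux in
  obtain ⟨M0, hM0⟩ := hx
  have hM0nn : (0:ℝ) ≤ M0 := le_trans (norm_nonneg _) (hM0 0)
  haveI : ProperSpace 𝕜 := FiniteDimensional.proper_rclike ℝ 𝕜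
  obtain ⟨D, hDc, hDd⟩ := TopologicalSpace.exists_countable_dense 𝕜
  set 𝒯 : Set (𝕜 × 𝕜 × ℝ) := {t | t.1 ∈ D ∧ t.2.1 ∈ D ∧ (∃ q : ℚ, (q : ℝ) = t.2.2) ∧
    0 < t.2.2 ∧ 10 * t.2.2 < ‖t.1 - t.2.1‖} with h𝒯
  have h𝒯c : 𝒯.Countable := by
    have hsub : 𝒯 ⊆ D ×ˢ (D ×ˢ (Set.range (fun q : ℚ => (q : ℝ)))) := by
      rintro ⟨zz, ww, rr⟩ ⟨h1, h2, ⟨q, hq⟩, _, _⟩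
      exact ⟨h1, h2, ⟨q, hq⟩⟩
    exact Set.Countable.mono hsub (hDc.prod (hDc.prod (Set.countable_range _)))
  have h𝒯ne : 𝒯.Nonempty := by
    obtain ⟨z', hz'D, hz'⟩ := hDd.exists_dist_lt (0 : 𝕜) one_pos
    obtain ⟨w', hw'D, hw'⟩ := hDd.exists_dist_lt (((20:ℝ) : 𝕜)) one_pos
    refine ⟨(z', w', (1:ℝ)), hz'D, hw'D, ⟨1, by norm_num⟩, one_pos, ?_⟩
    show (10:ℝ) * 1 < ‖z' - w'‖
    have h20 : dist (0 : 𝕜) (((20:ℝ):𝕜)) = 20 := by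
      rw [dist_eq_norm, zero_sub, norm_neg, RCLike.norm_ofReal]
      norm_num
    have htri := dist_triangle4 (0 : 𝕜) z' w' (((20:ℝ):𝕜))
    have : ‖z' - w'‖ = dist z' w' := (dist_eq_norm _ _).symm
    rw [this]
    have h1 : dist w' (((20:ℝ):𝕜)) < 1 := by rwa [dist_comm] at hw'
    linarith
  obtain ⟨p, hp⟩ := h𝒯c.exists_eq_range h𝒯ne
  have hp𝒯 : ∀ i, p i ∈ 𝒯 := fun i => hp ▸ Set.mem_range_self i
  set zz : ℕ → 𝕜 := fun i => (p i).1 with hzz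
  set ww : ℕ → 𝕜 := fun i => (p i).2.1 with hww
  set ρ : ℕ → ℝ := fun i => (p i).2.2 with hρ
  have hρpos : ∀ i, 0 < ρ i := fun i => (hp𝒯 i).2.2.2.1
  have hsep : ∀ i, 10 * ρ i < ‖zz i - ww i‖ := fun i => (hp𝒯 i).2.2.2.2
  -- the dual ball
  set S := {f : B →L[𝕜] 𝕜 // ‖f‖ ≤ 1} with hS
  set SA : ℕ → ℕ → Set S := fun i n => {t : S | ‖(t : B →L[𝕜] 𝕜) (x n) - zz i‖ ≤ ρ i}
    with hSA
  set SB : ℕ → ℕ → Set S := fun i n => {t : S | ‖(t : B →L[𝕜] 𝕜) (x n) - ww i‖ ≤ ρ i}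
    with hSB
  -- stage recursion
  obtain ⟨f, hf0, hf⟩ := seq_rec (fun q : ℕ × (ℕ → ℕ) => StrictMono q.2)
    (fun q q' => q'.1 = q.1 + 1 ∧ (∃ ψ : ℕ → ℕ, StrictMono ψ ∧ q'.2 = q.2 ∘ ψ) ∧
      (Indep (SA q.1 ∘ q'.2) (SB q.1 ∘ q'.2) ∨ Conv (SA q.1 ∘ q'.2) (SB q.1 ∘ q'.2)))
    (0, id) strictMono_id
    (by
      rintro ⟨i, θ⟩ hθ
      obtain ⟨ψ, hψ, hdi⟩ := rosenthal_pairs (SA i ∘ θ) (SB i ∘ θ)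
      exact ⟨(i + 1, θ ∘ ψ), hθ.comp hψ, rfl, ⟨ψ, hψ, rfl⟩, hdi⟩)
  set θ : ℕ → ℕ → ℕ := fun n => (f n).2 with hθdef
  have hfst : ∀ n, (f n).1 = n := by
    intro n
    induction n with
    | zero => rw [hf0]
    | succ n ih => rw [(hf n).2.1, ih]
  have hθmono : ∀ n, StrictMono (θ n) := fun n => (hf n).1
  have hψ : ∀ n, ∃ ψ : ℕ → ℕ, StrictMono ψ ∧ θ (n + 1) = θ n ∘ ψ := fun n => (hf n).2.2.1
  have hstage : ∀ n, Indep (SA n ∘ θ (n + 1)) (SB n ∘ θ (n + 1)) ∨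
      Conv (SA n ∘ θ (n + 1)) (SB n ∘ θ (n + 1)) := by
    intro n
    have := (hf n).2.2.2
    rwa [hfst n] at this
  by_cases hInd : ∃ i, Indep (SA i ∘ θ (i + 1)) (SB i ∘ θ (i + 1))
  · -- ℓ¹ case
    obtain ⟨i, hi⟩ := hInd
    refine Or.inr ⟨θ (i + 1), hθmono _, ρ i / 4, M0, by have := hρpos i; linarith, ?_⟩
    intro n a
    set y : ℕ → B := fun j => x (θ (i + 1) j) with hy
    have hxy : ∀ j, (x ∘ θ (i + 1)) j = y j := fun j => rfl
    set σ := ∑ j ∈ Finset.range n, ‖a j‖ with hσ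
    have hσnn : 0 ≤ σ := Finset.sum_nonneg (fun j _ => norm_nonneg _)
    set v := ∑ j ∈ Finset.range n, a j • y j with hv
    constructor
    · -- lower bound
      show ρ i / 4 * σ ≤ ‖v‖
      obtain ⟨E, hET, hE4⟩ := quarter n a
      obtain ⟨t1, ht1⟩ := hi n ↑E
      obtain ⟨t0, ht0⟩ := hi n (∅ : Set ℕ)
      have happ : ∀ t : S, (t : B →L[𝕜] 𝕜) v = ∑ j ∈ Finset.range n,
          a j * (t : B →L[𝕜] 𝕜) (y j) := by
        intro t
        rw [hv, map_sum]
        exact Finset.sum_congr rfl (fun j _ => by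
          rw [ContinuousLinearMap.map_smul, smul_eq_mul])
      set g : ℕ → 𝕜 := fun j => (t1 : B →L[𝕜] 𝕜) (y j) - (t0 : B →L[𝕜] 𝕜) (y j) with hg
      have hgE : ∀ j ∈ E, ‖g j - (ww i - zz i)‖ ≤ 2 * ρ i := by
        intro j hj
        have hjn : j < n := Finset.mem_range.mp (hET hj)
        have h1 := (ht1 j hjn).1 (by exact_mod_cast hj)
        have h0 := (ht0 j hjn).2 (by simp)
        have : g j - (ww i - zz i) = ((t1 : B →L[𝕜] 𝕜) (y j) - ww i) -
            ((t0 : B →L[𝕜] 𝕜) (y j) - zz i) := by rw [hg]; ring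
        rw [this]
        calc ‖_ - _‖ ≤ ‖(t1 : B →L[𝕜] 𝕜) (y j) - ww i‖ +
            ‖(t0 : B →L[𝕜] 𝕜) (y j) - zz i‖ := norm_sub_le _ _
        _ ≤ ρ i + ρ i := add_le_add h1 h0
        _ = 2 * ρ i := by ring
      have hgNE : ∀ j ∈ Finset.range n \ E, ‖g j‖ ≤ 2 * ρ i := by
        intro j hj
        rcases Finset.mem_sdiff.mp hj with ⟨hjn, hjE⟩
        have hjn' : j < n := Finset.mem_range.mp hjn
        have h1 := (ht1 j hjn').2 (by exact_mod_cast hjE)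
        have h0 := (ht0 j hjn').2 (by simp)
        have : g j = ((t1 : B →L[𝕜] 𝕜) (y j) - zz i) -
            ((t0 : B →L[𝕜] 𝕜) (y j) - zz i) := by rw [hg]; ring
        rw [this]
        calc ‖_ - _‖ ≤ ‖(t1 : B →L[𝕜] 𝕜) (y j) - zz i‖ +
            ‖(t0 : B →L[𝕜] 𝕜) (y j) - zz i‖ := norm_sub_le _ _
        _ ≤ ρ i + ρ i := add_le_add h1 h0
        _ = 2 * ρ i := by ring
      set Δ := (t1 : B →L[𝕜] 𝕜) v - (t0 : B →L[𝕜] 𝕜) v with hΔ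
      have hΔsum : Δ = ∑ j ∈ Finset.range n, a j * g j := by
        rw [hΔ, happ t1, happ t0, ← Finset.sum_sub_distrib]
        exact Finset.sum_congr rfl (fun j _ => by rw [hg]; ring)
      set SE := ∑ j ∈ E, a j with hSE
      have hsplit : Δ - SE * (ww i - zz i) =
          ∑ j ∈ E, a j * (g j - (ww i - zz i)) + ∑ j ∈ Finset.range n \ E, a j * g j := by
        rw [hΔsum, hSE, ← Finset.sum_sdiff hET (f := fun j => a j * g j)]
        have h1 : ∑ j ∈ E, a j * (g j - (ww i - zz i)) =
            (∑ j ∈ E, a j * g j) - (∑ j ∈ E, a j) * (ww i - zz i) := by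
          rw [Finset.sum_mul, ← Finset.sum_sub_distrib]
          exact Finset.sum_congr rfl (fun j _ => by ring)
        rw [h1]
        ring
      have herr : ‖Δ - SE * (ww i - zz i)‖ ≤ 2 * ρ i * σ := by
        rw [hsplit]
        calc ‖_ + _‖ ≤ ‖∑ j ∈ E, a j * (g j - (ww i - zz i))‖ +
            ‖∑ j ∈ Finset.range n \ E, a j * g j‖ := norm_add_le _ _
        _ ≤ (∑ j ∈ E, ‖a j‖ * (2 * ρ i)) + ∑ j ∈ Finset.range n \ E, ‖a j‖ * (2 * ρ i) := by
            gcongr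
            · refine (norm_sum_le _ _).trans (Finset.sum_le_sum (fun j hj => ?_))
              rw [norm_mul]
              exact mul_le_mul_of_nonneg_left (hgE j hj) (norm_nonneg _)
            · refine (norm_sum_le _ _).trans (Finset.sum_le_sum (fun j hj => ?_))
              rw [norm_mul]
              exact mul_le_mul_of_nonneg_left (hgNE j hj) (norm_nonneg _)
        _ = ∑ j ∈ Finset.range n, ‖a j‖ * (2 * ρ i) := by
            rw [← Finset.sum_sdiff hET (f := fun j => ‖a j‖ * (2 * ρ i))]; ring
        _ = 2 * ρ i * σ := by rw [← Finset.sum_mul, ← hσ]; ring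
      have hmain : ‖SE * (ww i - zz i)‖ ≥ 10 * ρ i * (σ / 4) := by
        rw [norm_mul]
        have h1 : σ / 4 ≤ ‖SE‖ := by rw [hSE]; linarith
        have h2 : 10 * ρ i ≤ ‖zz i - ww i‖ := le_of_lt (hsep i)
        have h2' : 10 * ρ i ≤ ‖ww i - zz i‖ := by rwa [norm_sub_rev] at h2
        have := mul_le_mul h1 h2' (by have := hρpos i; linarith) (norm_nonneg _)
        linarith
      have hΔub : ‖Δ‖ ≤ 2 * ‖v‖ := by
        rw [hΔ]
        have h1 : ‖(t1 : B →L[𝕜] 𝕜) v‖ ≤ ‖v‖ := by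
          refine le_trans (ContinuousLinearMap.le_opNorm _ _) ?_
          exact mul_le_of_le_one_left (norm_nonneg _) t1.2
        have h0 : ‖(t0 : B →L[𝕜] 𝕜) v‖ ≤ ‖v‖ := by
          refine le_trans (ContinuousLinearMap.le_opNorm _ _) ?_
          exact mul_le_of_le_one_left (norm_nonneg _) t0.2
        calc ‖(t1 : B →L[𝕜] 𝕜) v - (t0 : B →L[𝕜] 𝕜) v‖ ≤
            ‖(t1 : B →L[𝕜] 𝕜) v‖ + ‖(t0 : B →L[𝕜] 𝕜) v‖ := norm_sub_le _ _
        _ ≤ 2 * ‖v‖ := by linarith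
      have hΔlb : ‖Δ‖ ≥ 10 * ρ i * (σ / 4) - 2 * ρ i * σ := by
        have h := norm_sub_norm_le (SE * (ww i - zz i)) (SE * (ww i - zz i) - Δ)
        rw [sub_sub_cancel] at h
        have h2 : ‖SE * (ww i - zz i) - Δ‖ = ‖Δ - SE * (ww i - zz i)‖ := norm_sub_rev _ _
        rw [h2] at h
        linarith
      have := hρpos i
      linarith
    · -- upper bound
      show ‖∑ j ∈ Finset.range n, a j • y j‖ ≤ M0 * σ
      calc ‖∑ j ∈ Finset.range n, a j • y j‖ ≤ ∑ j ∈ Finset.range n, ‖a j • y j‖ :=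
          norm_sum_le _ _
      _ ≤ ∑ j ∈ Finset.range n, ‖a j‖ * M0 := by
          refine Finset.sum_le_sum (fun j _ => ?_)
          rw [norm_smul]
          exact mul_le_mul_of_nonneg_left (hM0 _) (norm_nonneg _)
      _ = M0 * σ := by rw [← Finset.sum_mul, ← hσ]; ring
  · -- weak-Cauchy case
    push_neg at hInd
    have hconv : ∀ i, Conv (SA i ∘ θ (i + 1)) (SB i ∘ θ (i + 1)) := fun i =>
      (hstage i).resolve_left (hInd i)
    set d : ℕ → ℕ := fun n => θ (n + 1) n with hd
    have hdmono : StrictMono d := by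
      apply strictMono_nat_of_lt_succ
      intro n
      obtain ⟨ψ, hψm, hψe⟩ := hψ (n + 1)
      have h1 : d (n + 1) = θ (n + 1) (ψ (n + 1)) := by rw [hd]; simp [hψe]
      rw [h1, hd]
      exact (hθmono (n + 1)) (lt_of_lt_of_le (Nat.lt_succ_self n) hψm.le_apply)
    -- the diagonal is eventually a subsequence of every stage
    have htrans : ∀ i b jj, ∃ k, jj ≤ k ∧ θ (i + 1 + b) jj = θ (i + 1) k := by
      intro i b
      induction b with
      | zero => exact fun jj => ⟨jj, le_refl _, rfl⟩
      | succ b ih =>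
        intro jj
        obtain ⟨ψ, hψm, hψe⟩ := hψ (i + 1 + b)
        obtain ⟨k, hk1, hk2⟩ := ih (ψ jj)
        refine ⟨k, le_trans hψm.le_apply hk1, ?_⟩
        have : i + 1 + (b + 1) = (i + 1 + b) + 1 := by omega
        rw [this, hψe]
        simpa using hk2
    have hdiag : ∀ i n, i ≤ n → ∃ k, n ≤ k ∧ d n = θ (i + 1) k := by
      intro i n hin
      obtain ⟨k, hk1, hk2⟩ := htrans i (n - i) n
      have : i + 1 + (n - i) = n + 1 := by omega
      rw [this] at hk2
      exact ⟨k, hk1, hk2⟩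
    refine Or.inl ⟨d, hdmono, ?_⟩
    have key : ∀ t : S, ∃ l : 𝕜, Tendsto (fun n => (t : B →L[𝕜] 𝕜) (x (d n))) atTop (𝓝 l) := by
      intro t
      set u : ℕ → 𝕜 := fun n => (t : B →L[𝕜] 𝕜) (x (d n)) with hu
      have hub : ∀ n, u n ∈ Metric.closedBall (0 : 𝕜) M0 := by
        intro n
        rw [Metric.mem_closedBall, dist_zero_right]
        calc ‖u n‖ ≤ ‖(t : B →L[𝕜] 𝕜)‖ * ‖x (d n)‖ := ContinuousLinearMap.le_opNorm _ _
        _ ≤ 1 * M0 := mul_le_mul t.2 (hM0 _) (norm_nonneg _) zero_le_one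
        _ = M0 := one_mul _
      suffices hC : CauchySeq u from cauchySeq_tendsto_of_complete hC
      by_contra hC
      rw [Metric.cauchySeq_iff] at hC
      push_neg at hC
      obtain ⟨ε, hε, hC⟩ := hC
      choose P hP Q hQ hPQ using hC
      obtain ⟨zc, _, ψ1, hψ1, hzc⟩ := tendsto_subseq_of_bounded
        (Metric.isBounded_closedBall (x := (0:𝕜)) (r := M0)) (fun n => hub (P n))
      obtain ⟨wc, _, ψ2, hψ2, hwc⟩ := tendsto_subseq_of_bounded
        (Metric.isBounded_closedBall (x := (0:𝕜)) (r := M0)) (fun n => hub (Q (ψ1 n)))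
      have hzc2 : Tendsto (fun k => u (P (ψ1 (ψ2 k)))) atTop (𝓝 zc) :=
        hzc.comp hψ2.tendsto_atTop
      have hwc2 : Tendsto (fun k => u (Q (ψ1 (ψ2 k)))) atTop (𝓝 wc) := hwc
      have hdzw : ε ≤ dist zc wc := by
        have hh : Tendsto (fun k => dist (u (P (ψ1 (ψ2 k)))) (u (Q (ψ1 (ψ2 k))))) atTop
            (𝓝 (dist zc wc)) := hzc2.dist hwc2
        exact ge_of_tendsto' hh (fun k => hPQ _)
      set δ := dist zc wc with hδ
      have hδpos : 0 < δ := lt_of_lt_of_le hε hdzw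
      obtain ⟨q, hq1, hq2⟩ := exists_rat_btwn (show δ / 100 < δ / 50 by linarith)
      have hqpos : (0:ℝ) < (q : ℝ) := lt_trans (by linarith) hq1
      obtain ⟨z', hz'D, hz'⟩ := hDd.exists_dist_lt zc (show (0:ℝ) < δ / 100 by linarith)
      obtain ⟨w', hw'D, hw'⟩ := hDd.exists_dist_lt wc (show (0:ℝ) < δ / 100 by linarith)
      have h𝒯m : (z', w', ((q : ℝ))) ∈ 𝒯 := by
        refine ⟨hz'D, hw'D, ⟨q, rfl⟩, hqpos, ?_⟩
        show 10 * (q:ℝ) < ‖z' - w'‖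
        have h1 : ‖z' - w'‖ = dist z' w' := dist_eq_norm _ _ |>.symm
        have htri := dist_triangle4 zc z' w' wc
        have h2 : dist w' wc = dist wc w' := dist_comm _ _
        rw [h1]
        linarith [dist_triangle zc z' w', dist_triangle z' w' wc,
          dist_triangle4 zc z' w' wc, dist_comm zc z' ▸ hz', dist_comm wc w' ▸ hw',
          dist_triangle z' zc wc, dist_triangle zc wc w']
      obtain ⟨i, hpi⟩ : ∃ i, p i = (z', w', ((q : ℝ))) := by
        have hmem : (z', w', ((q : ℝ))) ∈ Set.range p := hp ▸ h𝒯m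
        exact Set.mem_range.mp hmem
      have hzzi : zz i = z' := by show (p i).1 = z'; rw [hpi]
      have hwwi : ww i = w' := by show (p i).2.1 = w'; rw [hpi]
      have hρi : ρ i = (q : ℝ) := by show (p i).2.2 = (q : ℝ); rw [hpi]
      refine hconv i t ⟨?_, ?_⟩
      · -- infinitely many k with t ∈ SA i (θ (i+1) k)
        apply infinite_of_arbitrarily_large
        intro N
        obtain ⟨K, hK⟩ := Metric.tendsto_atTop.mp hzc2 ((q : ℝ) - δ / 100) (by linarith)
        set k0 := max K (max N i) with hk0
        have hdistk := hK k0 (le_max_left _ _)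
        set nn := P (ψ1 (ψ2 k0)) with hnn
        have hnnk : k0 ≤ nn := by
          calc k0 ≤ ψ2 k0 := hψ2.le_apply
          _ ≤ ψ1 (ψ2 k0) := hψ1.le_apply
          _ ≤ nn := hP _
        have hin : i ≤ nn := le_trans (le_trans (le_max_right N i) (le_max_right K _)) hnnk
        obtain ⟨k, hk1, hk2⟩ := hdiag i nn hin
        refine ⟨k, ?_, ?_⟩
        · calc N ≤ k0 := le_trans (le_max_left N i) (le_max_right K _)
          _ ≤ nn := hnnk
          _ ≤ k := hk1
        · show t ∈ SA i (θ (i + 1) k)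
          rw [← hk2, hSA]
          show ‖(t : B →L[𝕜] 𝕜) (x (d nn)) - zz i‖ ≤ ρ i
          rw [hzzi, hρi]
          have h1 : ‖u nn - zc‖ < (q : ℝ) - δ / 100 := by
            rw [← dist_eq_norm]; exact hdistk
          have h2 : ‖zc - z'‖ < δ / 100 := by rw [← dist_eq_norm]; exact hz'
          have heq : (t : B →L[𝕜] 𝕜) (x (d nn)) - z' = (u nn - zc) + (zc - z') := by
            simp only [hu]; ring
          rw [heq]
          calc ‖(u nn - zc) + (zc - z')‖ ≤ ‖u nn - zc‖ + ‖zc - z'‖ := norm_add_le _ _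
          _ ≤ (q : ℝ) := by linarith
      · -- infinitely many k with t ∈ SB i (θ (i+1) k)
        apply infinite_of_arbitrarily_large
        intro N
        obtain ⟨K, hK⟩ := Metric.tendsto_atTop.mp hwc2 ((q : ℝ) - δ / 100) (by linarith)
        set k0 := max K (max N i) with hk0
        have hdistk := hK k0 (le_max_left _ _)
        set nn := Q (ψ1 (ψ2 k0)) with hnn
        have hnnk : k0 ≤ nn := by
          calc k0 ≤ ψ2 k0 := hψ2.le_apply
          _ ≤ ψ1 (ψ2 k0) := hψ1.le_apply
          _ ≤ nn := hQ _
        have hin : i ≤ nn := le_trans (le_trans (le_max_right N i) (le_max_right K _)) hnnk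
        obtain ⟨k, hk1, hk2⟩ := hdiag i nn hin
        refine ⟨k, ?_, ?_⟩
        · calc N ≤ k0 := le_trans (le_max_left N i) (le_max_right K _)
          _ ≤ nn := hnnk
          _ ≤ k := hk1
        · show t ∈ SB i (θ (i + 1) k)
          rw [← hk2, hSB]
          show ‖(t : B →L[𝕜] 𝕜) (x (d nn)) - ww i‖ ≤ ρ i
          rw [hwwi, hρi]
          have h1 : ‖u nn - wc‖ < (q : ℝ) - δ / 100 := by
            rw [← dist_eq_norm]; exact hdistk
          have h2 : ‖wc - w'‖ < δ / 100 := by rw [← dist_eq_norm]; exact hw'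
          have heq : (t : B →L[𝕜] 𝕜) (x (d nn)) - w' = (u nn - wc) + (wc - w') := by
            simp only [hu]; ring
          rw [heq]
          calc ‖(u nn - wc) + (wc - w')‖ ≤ ‖u nn - wc‖ + ‖wc - w'‖ := norm_add_le _ _
          _ ≤ (q : ℝ) := by linarith
    -- from the ball to all functionals
    intro F
    rcases eq_or_ne F 0 with rfl | hF0
    · exact ⟨0, by simpa using tendsto_const_nhds⟩
    · have hFpos : 0 < ‖F‖ := norm_pos_iff.mpr hF0
      set t : S := ⟨((‖F‖ : ℝ) : 𝕜)⁻¹ • F, by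
        refine le_trans (ContinuousLinearMap.opNorm_smul_le _ _) ?_
        rw [norm_inv, RCLike.norm_ofReal, abs_of_pos hFpos]
        exact le_of_eq (inv_mul_cancel₀ (ne_of_gt hFpos))⟩ with ht
      obtain ⟨l, hl⟩ := key t
      refine ⟨((‖F‖ : ℝ) : 𝕜) * l, ?_⟩
      have hne : ((‖F‖ : ℝ) : 𝕜) ≠ 0 := RCLike.ofReal_ne_zero.mpr (ne_of_gt hFpos)
      have hFt : ∀ v : B, F v = ((‖F‖ : ℝ) : 𝕜) * ((t : B →L[𝕜] 𝕜) v) := by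
        intro v
        show F v = ((‖F‖ : ℝ) : 𝕜) * ((((‖F‖ : ℝ) : 𝕜)⁻¹ • F) v)
        rw [ContinuousLinearMap.smul_apply, smul_eq_mul, ← mul_assoc,
          mul_inv_cancel₀ hne, one_mul]
      have hfun : (fun n => F ((x ∘ d) n)) =
          fun n => ((‖F‖ : ℝ) : 𝕜) * ((t : B →L[𝕜] 𝕜) (x (d n))) := by
        funext n
        exact hFt _
      rw [hfun]
      exact hl.const_mul _
end

section
/- If (b_j) is a strongly summing basic sequence in a Banach space and (b_j^*) are its biorthogonal functionals in the dual of the closed linear span [b_j], then the sequence of partial sums (Σ_{j=1}^n b_j^*)_{n≥1} is a weak-Cauchy sequence in [b_j]^* which does not converge weakly; consequently [b_j]^* is not weakly sequentially complete. -/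
open Filter Topology

section Aux
open Filter Topology
variable {𝕜 : Type*} [RCLike 𝕜] {X : Type*} [NormedAddCommGroup X] [NormedSpace 𝕜 X]

lemma bstar_apply_sum (b : ℕ → X) (bstar : ℕ → X →L[𝕜] 𝕜)
    (hbi : ∀ i j, bstar j (b i) = if i = j then 1 else 0) (n : ℕ) (a : ℕ → 𝕜) (j : ℕ) :
    bstar j (∑ i ∈ Finset.range n, a i • b i) = if j ∈ Finset.range n then a j else 0 := by
  rw [map_sum]
  simp only [map_smul, hbi, smul_eq_mul, mul_ite, mul_one, mul_zero]
  exact Finset.sum_ite_eq' _ _ _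

/-- Every element of the span of the range of `b` is a finite initial linear combination. -/
lemma mem_span_range_nat (b : ℕ → X) {x : X} (hx : x ∈ Submodule.span 𝕜 (Set.range b)) :
    ∃ (n : ℕ) (a : ℕ → 𝕜), x = ∑ i ∈ Finset.range n, a i • b i := by
  rw [Finsupp.mem_span_range_iff_exists_finsupp] at hx
  obtain ⟨c, hc⟩ := hx
  refine ⟨(c.support.sup id) + 1, fun i => c i, ?_⟩
  rw [← hc, Finsupp.sum]
  refine Finset.sum_subset ?_ ?_
  · intro i hi
    exact Finset.mem_range.mpr (Nat.lt_succ_of_le (Finset.le_sup (f := id) hi))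
  · intro i _ hi
    rw [Finsupp.notMem_support_iff.mp hi, zero_smul]

end Aux

/-- If (b_j) is a strongly summing basic sequence spanning the Banach space X = [b_j],
with biorthogonal functionals (b_j^*), then the partial sums of (b_j^*) form a
non-trivial weak-Cauchy sequence in X^*; hence X^* is not weakly sequentially complete. -/
theorem dual_not_wsc_of_stronglySumming {𝕜 : Type*} [RCLike 𝕜] {X : Type*}
    [NormedAddCommGroup X] [NormedSpace 𝕜 X] [CompleteSpace X] (b : ℕ → X)
    (hdense : Dense (Submodule.span 𝕜 (Set.range b) : Set X))
    (hss : StronglySumming 𝕜 b)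
    (bstar : ℕ → X →L[𝕜] 𝕜)
    (hbi : ∀ i j, bstar j (b i) = if i = j then 1 else 0) :
    WeakCauchy 𝕜 (fun n => ∑ j ∈ Finset.range (n + 1), bstar j) ∧
    ¬ WeaklyConvergent 𝕜 (fun n => ∑ j ∈ Finset.range (n + 1), bstar j) ∧
    ¬ WeaklySeqComplete 𝕜 (X →L[𝕜] 𝕜) := by
  classical
  obtain ⟨hwc, ⟨hbne, Λ₀, hΛ₀⟩, hsum⟩ := hss
  set Λ : ℝ := max Λ₀ 0 with hΛdef
  have hΛnn : 0 ≤ Λ := le_max_right _ _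
  have hΛ : ∀ (c : ℕ → 𝕜) (k n : ℕ), k ≤ n →
      ‖∑ i ∈ Finset.range k, c i • b i‖ ≤ Λ * ‖∑ i ∈ Finset.range n, c i • b i‖ := by
    intro c k n hkn
    exact (hΛ₀ c k n hkn).trans
      (mul_le_mul_of_nonneg_right (le_max_left _ _) (norm_nonneg _))
  -- the basis projections
  set P : ℕ → X →L[𝕜] X := fun k => ∑ j ∈ Finset.range k, (bstar j).smulRight (b j) with hPdef
  have hPapply : ∀ k x, P k x = ∑ j ∈ Finset.range k, bstar j x • b j := by
    intro k x
    simp [hPdef, ContinuousLinearMap.sum_apply, ContinuousLinearMap.smulRight_apply]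
  have hPspan : ∀ k, ∀ x ∈ Submodule.span 𝕜 (Set.range b), ‖P k x‖ ≤ Λ * ‖x‖ := by
    intro k x hx
    obtain ⟨n, a, rfl⟩ := mem_span_range_nat b hx
    set a' : ℕ → 𝕜 := fun i => if i ∈ Finset.range n then a i else 0 with ha'def
    have h1 : P k (∑ i ∈ Finset.range n, a i • b i) = ∑ j ∈ Finset.range k, a' j • b j := by
      rw [hPapply]
      refine Finset.sum_congr rfl fun j _ => ?_
      rw [bstar_apply_sum b bstar hbi]
    have h2 : ∑ j ∈ Finset.range (max k n), a' j • b j = ∑ i ∈ Finset.range n, a i • b i := by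
      have e1 : ∑ j ∈ Finset.range n, a' j • b j = ∑ j ∈ Finset.range (max k n), a' j • b j :=
        Finset.sum_subset (Finset.range_subset_range.mpr (le_max_right _ _))
          (fun i _ hi => by
            show (if i ∈ Finset.range n then a i else 0) • b i = 0
            rw [if_neg hi, zero_smul])
      have e2 : ∑ j ∈ Finset.range n, a' j • b j = ∑ i ∈ Finset.range n, a i • b i :=
        Finset.sum_congr rfl fun i hi => by
          show (if i ∈ Finset.range n then a i else 0) • b i = a i • b i
          rw [if_pos hi]
      rw [← e1, e2]
    rw [h1, ← h2]
    exact hΛ a' k (max k n) (le_max_left _ _)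
  have hP : ∀ k x, ‖P k x‖ ≤ Λ * ‖x‖ := by
    intro k x
    have hclosed : IsClosed {y : X | ‖P k y‖ ≤ Λ * ‖y‖} :=
      isClosed_le ((P k).continuous.norm) (continuous_const.mul continuous_norm)
    exact closure_minimal (fun y hy => hPspan k y hy) hclosed (hdense x)
  -- key bound on the vectors ∑ F(b_j^*) • b_j
  have hvF : ∀ (F : (X →L[𝕜] 𝕜) →L[𝕜] 𝕜) (n : ℕ),
      ‖∑ j ∈ Finset.range n, F (bstar j) • b j‖ ≤ Λ * ‖F‖ := by
    intro F n
    refine NormedSpace.norm_le_dual_bound 𝕜 _ (mul_nonneg hΛnn (norm_nonneg F)) fun f => ?_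
    have hcomp : f.comp (P n) = ∑ j ∈ Finset.range n, f (b j) • bstar j := by
      ext x
      simp only [ContinuousLinearMap.comp_apply, hPapply, map_sum, map_smul,
        ContinuousLinearMap.sum_apply, ContinuousLinearMap.smul_apply, smul_eq_mul]
      first
      | rfl
      | exact Finset.sum_congr rfl fun j _ => mul_comm _ _
    have heval : f (∑ j ∈ Finset.range n, F (bstar j) • b j) = F (f.comp (P n)) := by
      rw [hcomp, map_sum, map_sum]
      simp only [map_smul, smul_eq_mul]
      exact Finset.sum_congr rfl fun j _ => mul_comm _ _
    rw [heval]
    calc ‖F (f.comp (P n))‖ ≤ ‖F‖ * ‖f.comp (P n)‖ := F.le_opNorm _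
      _ ≤ ‖F‖ * (‖f‖ * ‖P n‖) :=
        mul_le_mul_of_nonneg_left ((f.opNorm_comp_le (P n))) (norm_nonneg F)
      _ ≤ ‖F‖ * (‖f‖ * Λ) := by
        refine mul_le_mul_of_nonneg_left (mul_le_mul_of_nonneg_left ?_ (norm_nonneg f))
          (norm_nonneg F)
        exact (P n).opNorm_le_bound hΛnn (hP n)
      _ = Λ * ‖F‖ * ‖f‖ := by ring
  -- Part 1: weak Cauchy
  have part1 : WeakCauchy 𝕜 (fun n => ∑ j ∈ Finset.range (n + 1), bstar j) := by
    intro F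
    obtain ⟨l, hl⟩ := hsum (fun j => F (bstar j)) ⟨Λ * ‖F‖, fun n => hvF F n⟩
    refine ⟨l, ?_⟩
    have : (fun n => F (∑ j ∈ Finset.range (n + 1), bstar j)) =
        (fun n => ∑ j ∈ Finset.range n, F (bstar j)) ∘ (fun n => n + 1) := by
      funext n; simp [map_sum]
    rw [this]
    exact hl.comp (tendsto_add_atTop_nat 1)
  -- the limit functional G on the dual
  have hptbd : ∀ f : X →L[𝕜] 𝕜, ∃ C, ∀ n, ‖(ContinuousLinearMap.apply 𝕜 𝕜 (b n)) f‖ ≤ C := by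
    intro f
    obtain ⟨l, hl⟩ := hwc f
    obtain ⟨C, hC⟩ := (hl.norm).bddAbove_range
    exact ⟨C, fun n => hC (Set.mem_range_self n)⟩
  obtain ⟨C', hC'⟩ := banach_steinhaus (g := fun n => ContinuousLinearMap.apply 𝕜 𝕜 (b n)) hptbd
  have hC'nn : 0 ≤ C' := (norm_nonneg _).trans (hC' 0)
  have hL0 : ∀ f : X →L[𝕜] 𝕜, ∃ l : 𝕜, Tendsto (fun n => f (b n)) atTop (𝓝 l) := hwc
  set L0 : (X →L[𝕜] 𝕜) → 𝕜 := fun f => Classical.choose (hL0 f) with hL0def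
  have hL : ∀ f : X →L[𝕜] 𝕜, Tendsto (fun n => f (b n)) atTop (𝓝 (L0 f)) :=
    fun f => Classical.choose_spec (hL0 f)
  set Llin : (X →L[𝕜] 𝕜) →ₗ[𝕜] 𝕜 :=
    { toFun := L0
      map_add' := by
        intro f g
        refine tendsto_nhds_unique (hL (f + g)) ?_
        exact ((hL f).add (hL g)).congr (fun n => rfl)
      map_smul' := by
        intro c f
        refine tendsto_nhds_unique (hL (c • f)) ?_
        exact ((hL f).const_mul c).congr (fun n => rfl) } with hLlindef
  have hLbound : ∀ f : X →L[𝕜] 𝕜, ‖Llin f‖ ≤ C' * ‖f‖ := by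
    intro f
    refine le_of_tendsto (hL f).norm (Filter.Eventually.of_forall fun n => ?_)
    calc ‖f (b n)‖ = ‖(ContinuousLinearMap.apply 𝕜 𝕜 (b n)) f‖ := rfl
      _ ≤ ‖ContinuousLinearMap.apply 𝕜 𝕜 (b n)‖ * ‖f‖ := ContinuousLinearMap.le_opNorm _ _
      _ ≤ C' * ‖f‖ := mul_le_mul_of_nonneg_right (hC' n) (norm_nonneg f)
  set G : (X →L[𝕜] 𝕜) →L[𝕜] 𝕜 := LinearMap.mkContinuous Llin C' hLbound with hGdef
  have hGapply : ∀ f : X →L[𝕜] 𝕜, Tendsto (fun n => f (b n)) atTop (𝓝 (G f)) := hL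
  -- partial sums evaluated at the basis
  have hseval : ∀ n i : ℕ, (∑ j ∈ Finset.range (n + 1), bstar j) (b i)
      = if i ∈ Finset.range (n + 1) then (1 : 𝕜) else 0 := by
    intro n i
    rw [ContinuousLinearMap.sum_apply]
    simp only [hbi]
    exact Finset.sum_ite_eq _ _ _
  have hGs : ∀ n, G (∑ j ∈ Finset.range (n + 1), bstar j) = 0 := by
    intro n
    refine tendsto_nhds_unique (hGapply _) ?_
    refine Tendsto.congr' ?_ (tendsto_const_nhds (x := (0 : 𝕜)))
    filter_upwards [Filter.eventually_ge_atTop (n + 1)] with m hm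
    rw [hseval]
    simp only [Finset.mem_range]
    rw [if_neg (by omega)]
  -- Part 2: not weakly convergent
  have part2 : ¬ WeaklyConvergent 𝕜 (fun n => ∑ j ∈ Finset.range (n + 1), bstar j) := by
    rintro ⟨φ, hφ⟩
    have hφb : ∀ i, φ (b i) = 1 := by
      intro i
      have h := hφ (ContinuousLinearMap.apply 𝕜 𝕜 (b i))
      refine tendsto_nhds_unique h ?_
      refine Tendsto.congr' ?_ (tendsto_const_nhds (x := (1 : 𝕜)))
      filter_upwards [Filter.eventually_ge_atTop i] with n hn
      have : (ContinuousLinearMap.apply 𝕜 𝕜 (b i)) (∑ j ∈ Finset.range (n + 1), bstar j)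
          = (∑ j ∈ Finset.range (n + 1), bstar j) (b i) := rfl
      rw [this, hseval, if_pos (Finset.mem_range.mpr (by omega))]
    have hGφ1 : G φ = 1 := by
      refine tendsto_nhds_unique (hGapply φ) ?_
      have he : (fun n => φ (b n)) = fun _ : ℕ => (1 : 𝕜) := funext hφb
      rw [he]; exact tendsto_const_nhds
    have hGφ0 : G φ = 0 := by
      have h0 : Tendsto (fun n : ℕ => G (∑ j ∈ Finset.range (n + 1), bstar j)) atTop
          (𝓝 (0 : 𝕜)) := by
        have he : (fun n : ℕ => G (∑ j ∈ Finset.range (n + 1), bstar j)) =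
            fun _ : ℕ => (0 : 𝕜) := funext hGs
        rw [he]; exact tendsto_const_nhds
      exact tendsto_nhds_unique (hφ G) h0
    exact one_ne_zero (hGφ1 ▸ hGφ0)
  exact ⟨part1, part2, fun hwsc => part2 (hwsc _ part1)⟩
end

section
/- No strongly summing sequence has a convex block basis equivalent to the summing basis; that is, the two alternatives of the c₀-theorem are mutually exclusive. -/
open Filter Topology

namespace SsAux

lemma range_succ_eq_Iic (n : ℕ) : Finset.range (n + 1) = Finset.Iic n := by
  ext x; simp [Nat.lt_succ_iff]

lemma sum_Iic_split {M : Type*} [AddCommMonoid M] (f : ℕ → M) {a b : ℕ} (h : a ≤ b) :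
    ∑ i ∈ Finset.Iic b, f i = ∑ i ∈ Finset.Iic a, f i + ∑ i ∈ Finset.Ioc a b, f i := by
  rw [← Finset.sum_union (by rw [Finset.disjoint_left]; intro x hx hx'; simp at hx hx'; omega)]
  congr 1; ext x; simp; omega

/-- Block index of `i` relative to the block boundaries `n`. -/
def J (n : ℕ → ℕ) (i : ℕ) : ℕ := Nat.findGreatest (fun j => n j < i) i

lemma J_eq {n : ℕ → ℕ} (hn : StrictMono n) {i j : ℕ} (h1 : n j < i) (h2 : i ≤ n (j + 1)) :
    J n i = j := by
  have hji : j ≤ i := le_trans hn.le_apply h1.le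
  refine le_antisymm ?_ (Nat.le_findGreatest hji h1)
  by_contra hlt
  push_neg at hlt
  have hP : n (J n i) < i := Nat.findGreatest_spec (P := fun j => n j < i) hji h1
  have : n (j + 1) ≤ n (J n i) := hn.monotone hlt
  omega

lemma block_sum {𝕜 : Type*} [RCLike 𝕜] {V : Type*} [AddCommMonoid V] [Module 𝕜 V]
    {n : ℕ → ℕ} (hn : StrictMono n) (c : ℕ → ℝ) (a : ℕ → 𝕜) (f : ℕ → V) (m : ℕ) :
    ∑ i ∈ Finset.Iic (n m), (if n 0 < i then a (J n i) * (c i : 𝕜) else 0) • f i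
      = ∑ j ∈ Finset.range m, a j • ∑ i ∈ Finset.Ioc (n j) (n (j + 1)), (c i : 𝕜) • f i := by
  induction m with
  | zero =>
    rw [Finset.range_zero, Finset.sum_empty]
    apply Finset.sum_eq_zero
    intro i hi
    simp only [Finset.mem_Iic] at hi
    rw [if_neg (by omega), zero_smul]
  | succ m ih =>
    rw [sum_Iic_split _ (hn.monotone (Nat.le_succ m)), ih, Finset.sum_range_succ]
    congr 1
    rw [Finset.smul_sum]
    apply Finset.sum_congr rfl
    intro i hi
    simp only [Finset.mem_Ioc] at hi
    have h0 : n 0 < i := lt_of_le_of_lt (hn.monotone (Nat.zero_le m)) hi.1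
    rw [if_pos h0, J_eq hn hi.1 hi.2, mul_smul]

end SsAux

/-- The alternatives of the c₀-theorem are mutually exclusive: no strongly summing
sequence has a convex block basis equivalent to the summing basis. -/
theorem ss_not_equiv_summing {𝕜 : Type*} [RCLike 𝕜] {B : Type*} [NormedAddCommGroup B]
    [NormedSpace 𝕜 B] [CompleteSpace B] (b u : ℕ → B)
    (hss : StronglySumming 𝕜 b) (hcb : ConvexBlockBasis 𝕜 b u) :
    ¬ EquivSummingBasis 𝕜 u := by
  rintro ⟨A, C, hA, hE⟩
  obtain ⟨hwc, ⟨hne, Λ, hΛ⟩, hsum⟩ := hss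
  obtain ⟨n, c, hn, hc0, hc1, hu⟩ := hcb
  set a : ℕ → 𝕜 := fun j => (-1 : 𝕜) ^ j with ha
  set d : ℕ → 𝕜 := fun i => if n 0 < i then a (SsAux.J n i) * (c i : 𝕜) else 0 with hd
  -- partial sums of a are bounded by 1 in norm
  have hpa : ∀ k, ‖∑ i ∈ Finset.range k, a i‖ ≤ 1 := by
    intro k
    rw [ha]
    rw [show ∑ i ∈ Finset.range k, (-1 : 𝕜) ^ i = if Even k then 0 else 1 from
      neg_one_geom_sum]
    split <;> simp
  -- partial sums at block boundaries
  have hkey : ∀ m, ∑ i ∈ Finset.range (n m + 1), d i • b i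
      = ∑ j ∈ Finset.range m, a j • u j := by
    intro m
    rw [SsAux.range_succ_eq_Iic, hd, SsAux.block_sum hn c a b m]
    exact Finset.sum_congr rfl fun j _ => by rw [hu j]
  -- boundary sums bounded by |C|
  have hbd : ∀ m, ‖∑ i ∈ Finset.range (n m + 1), d i • b i‖ ≤ |C| := by
    intro m
    rw [hkey m]
    obtain ⟨k, hk, hC⟩ := (hE m a).2
    calc ‖∑ j ∈ Finset.range m, a j • u j‖ ≤ C * ‖∑ i ∈ Finset.range k, a i‖ := hC
      _ ≤ |C| * ‖∑ i ∈ Finset.range k, a i‖ :=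
          mul_le_mul_of_nonneg_right (le_abs_self C) (norm_nonneg _)
      _ ≤ |C| * 1 := mul_le_mul_of_nonneg_left (hpa k) (abs_nonneg C)
      _ = |C| := mul_one _
  -- all partial sums of ∑ d i • b i are bounded
  have hM : ∀ N, ‖∑ i ∈ Finset.range N, d i • b i‖ ≤ |Λ| * |C| := by
    intro N
    have hNn : N ≤ n N + 1 := Nat.le_succ_of_le hn.le_apply
    calc ‖∑ i ∈ Finset.range N, d i • b i‖
        ≤ Λ * ‖∑ i ∈ Finset.range (n N + 1), d i • b i‖ := hΛ d N (n N + 1) hNn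
      _ ≤ |Λ| * ‖∑ i ∈ Finset.range (n N + 1), d i • b i‖ :=
          mul_le_mul_of_nonneg_right (le_abs_self Λ) (norm_nonneg _)
      _ ≤ |Λ| * |C| := mul_le_mul_of_nonneg_left (hbd N) (abs_nonneg Λ)
  obtain ⟨l, hl⟩ := hsum d ⟨|Λ| * |C|, hM⟩
  -- the partial sums of d at block boundaries equal partial sums of a
  have hscal : ∀ m, ∑ i ∈ Finset.range (n m + 1), d i
      = ∑ j ∈ Finset.range m, a j := by
    intro m
    have := SsAux.block_sum (𝕜 := 𝕜) (V := 𝕜) hn c a (fun _ => (1 : 𝕜)) m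
    simp only [smul_eq_mul, mul_one] at this
    rw [SsAux.range_succ_eq_Iic, hd, this]
    apply Finset.sum_congr rfl
    intro j _
    have h1 : (∑ x ∈ Finset.Ioc (n j) (n (j + 1)), (c x : 𝕜)) = 1 := by
      exact_mod_cast hc1 j
    rw [h1, mul_one]
  -- compose with the boundary subsequence
  have htend : Tendsto (fun m => ∑ j ∈ Finset.range m, a j) atTop (𝓝 l) := by
    have hmono : StrictMono (fun m => n m + 1) := fun x y hxy => by
      simpa using Nat.succ_lt_succ (hn hxy)
    exact (hl.comp hmono.tendsto_atTop).congr hscal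
  have htend' : Tendsto (fun m : ℕ => if Even m then (0 : 𝕜) else 1) atTop (𝓝 l) := by
    have : (fun m : ℕ => ∑ j ∈ Finset.range m, a j)
        = fun m : ℕ => if Even m then (0 : 𝕜) else 1 := by
      funext m; exact neg_one_geom_sum
    rwa [this] at htend
  have h0 : l = 0 := by
    have hc : Tendsto (fun k : ℕ => 2 * k) atTop atTop :=
      (show StrictMono (fun k : ℕ => 2 * k) from fun x y h => by dsimp only; omega).tendsto_atTop
    have h := htend'.comp hc
    have heq : ((fun m : ℕ => if Even m then (0 : 𝕜) else 1) ∘ fun k => 2 * k)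
        = fun _ => (0 : 𝕜) := by
      funext k
      simp [Function.comp, even_two_mul]
    rw [heq] at h
    exact tendsto_nhds_unique h tendsto_const_nhds
  have h1 : l = 1 := by
    have hc : Tendsto (fun k : ℕ => 2 * k + 1) atTop atTop :=
      (show StrictMono (fun k : ℕ => 2 * k + 1) from
        fun x y h => by dsimp only; omega).tendsto_atTop
    have h := htend'.comp hc
    have heq : ((fun m : ℕ => if Even m then (0 : 𝕜) else 1) ∘ fun k => 2 * k + 1)
        = fun _ => (1 : 𝕜) := by
      funext k
      simp [Function.comp, Nat.even_add_one, parity_simps]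
    rw [heq] at h
    exact tendsto_nhds_unique h tendsto_const_nhds
  rw [h0] at h1
  exact zero_ne_one h1
end

section
/- Let K be a compact metric space and f : K → ℂ a bounded function. Then f belongs to D(K), i.e., f = (u₁ - u₂) + i(u₃ - u₄) for bounded lower semicontinuous functions u₁,…,u₄, if and only if there exists a sequence (φ_j) of continuous functions on K with sup_{k∈K} Σ_j |φ_j(k)| < ∞ and Σ_j φ_j(k) = f(k) for every k ∈ K. -/
open Filter Topology

section Helpers

variable {K : Type*} [MetricSpace K]

/-- Merge two series by interleaving even/odd indices. -/
lemma hasSum_merge {M : Type*} [AddCommMonoid M] [TopologicalSpace M] [ContinuousAdd M]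
    {a b : ℕ → M} {sa sb : M} (ha : HasSum a sa) (hb : HasSum b sb) :
    HasSum (fun n => if Even n then a (n / 2) else b (n / 2)) (sa + sb) := by
  refine HasSum.even_add_odd ?_ ?_
  · have : (fun k => if Even (2 * k) then a ((2 * k) / 2) else b ((2 * k) / 2)) = a := by
      funext k
      rw [if_pos (even_two_mul k)]
      congr 1; omega
    rw [this]; exact ha
  · have : (fun k => if Even (2 * k + 1) then a ((2 * k + 1) / 2) else b ((2 * k + 1) / 2)) = b := by
      funext k
      rw [if_neg (by rw [Nat.even_iff]; omega)]
      congr 1; omega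
    rw [this]; exact hb

/-- Lower semicontinuity of a tsum of nonnegative continuous functions. -/
lemma lowerSemicontinuous_tsum' {g : ℕ → K → ℝ}
    (hc : ∀ j, Continuous (g j)) (hnn : ∀ j x, 0 ≤ g j x) (hs : ∀ x, Summable fun j => g j x) :
    LowerSemicontinuous fun x => ∑' j, g j x := by
  intro x a ha
  have ht := (hs x).hasSum.tendsto_sum_nat
  obtain ⟨n, hn⟩ := (ht.eventually (eventually_gt_nhds ha)).exists
  have hcn : Continuous fun y => ∑ j ∈ Finset.range n, g j y :=
    continuous_finset_sum _ fun j _ => hc j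
  have hev : ∀ᶠ y in 𝓝 x, a < ∑ j ∈ Finset.range n, g j y :=
    (continuousAt_const).eventually_lt hcn.continuousAt hn
  filter_upwards [hev] with y hy
  exact hy.trans_le (Summable.sum_le_tsum _ (fun j _ => hnn j y) (hs y))

/-- Every bounded lower semicontinuous function admits an absolutely bounded pointwise
series representation by continuous functions. -/
lemma exists_rep_of_bddLSC {u : K → ℝ} {M : ℝ}
    (hu : LowerSemicontinuous u) (hM : ∀ x, |u x| ≤ M) :
    ∃ ψ : ℕ → K → ℝ, (∀ j, Continuous (ψ j)) ∧
      (∀ x, HasSum (fun j => ψ j x) (u x)) ∧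
      (∀ x, HasSum (fun j => |ψ j x|) (∑' j, |ψ j x|)) ∧
      (∀ x, (∑' j, |ψ j x|) ≤ 3 * M) := by
  set g : ℕ → K → ℝ := fun n x => ⨅ y, (u y + n * dist x y) with hg
  have hbdd : ∀ (n : ℕ) (x : K), BddBelow (Set.range fun y => u y + n * dist x y) := by
    intro n x
    refine ⟨-M, ?_⟩
    rintro _ ⟨y, rfl⟩
    show -M ≤ u y + n * dist x y
    have h1 := (abs_le.1 (hM y)).1
    have h2 : (0:ℝ) ≤ (n:ℝ) * dist x y := by positivity
    linarith
  have hle : ∀ n x, g n x ≤ u x := by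
    intro n x
    have := ciInf_le (hbdd n x) x
    simpa using this
  have hlb : ∀ n x, -M ≤ g n x := by
    intro n x
    haveI : Nonempty K := ⟨x⟩
    refine le_ciInf fun y => ?_
    show -M ≤ u y + n * dist x y
    have h1 := (abs_le.1 (hM y)).1
    have h2 : (0:ℝ) ≤ (n:ℝ) * dist x y := by positivity
    linarith
  have hkey : ∀ (n : ℕ) (x x' : K), g n x ≤ g n x' + n * dist x x' := by
    intro n x x'
    haveI : Nonempty K := ⟨x⟩
    rw [← sub_le_iff_le_add]
    refine le_ciInf fun y => ?_
    show g n x - ↑n * dist x x' ≤ u y + n * dist x' y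
    have h1 : g n x ≤ u y + n * dist x y := ciInf_le (hbdd n x) y
    have h2 : dist x y ≤ dist x x' + dist x' y := dist_triangle x x' y
    have h3 : (0:ℝ) ≤ (n:ℝ) := Nat.cast_nonneg n
    nlinarith
  have hcont : ∀ n, Continuous (g n) := by
    intro n
    refine (LipschitzWith.of_dist_le_mul (K := (n : NNReal)) (f := g n) ?_).continuous
    intro x x'
    rw [Real.dist_eq, abs_sub_le_iff]
    refine ⟨?_, ?_⟩
    · have := hkey n x x'
      simp only [NNReal.coe_natCast]
      linarith
    · have := hkey n x' x
      rw [dist_comm x' x] at this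
      simp only [NNReal.coe_natCast]
      linarith
  have hmono : ∀ x, Monotone fun n => g n x := by
    intro x
    refine monotone_nat_of_le_succ fun n => ?_
    haveI : Nonempty K := ⟨x⟩
    refine le_ciInf fun y => ?_
    show g n x ≤ u y + (↑(n+1):ℝ) * dist x y
    have h1 : g n x ≤ u y + n * dist x y := ciInf_le (hbdd n x) y
    have h2 : (0:ℝ) ≤ dist x y := dist_nonneg
    push_cast
    nlinarith
  have htend : ∀ x, Tendsto (fun n => g n x) atTop (𝓝 (u x)) := by
    intro x
    haveI : Nonempty K := ⟨x⟩
    rw [tendsto_order]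
    constructor
    · intro a ha
      obtain ⟨a', ha1, ha2⟩ := exists_between ha
      have hev := hu x a' ha2
      rw [Metric.eventually_nhds_iff_ball] at hev
      obtain ⟨δ, hδ, hball⟩ := hev
      obtain ⟨N, hN⟩ := exists_nat_ge ((a' + M) / δ)
      rw [eventually_atTop]
      refine ⟨N, fun n hn => ?_⟩
      have hNn : (N:ℝ) ≤ n := by exact_mod_cast hn
      have key : a' ≤ g n x := by
        refine le_ciInf fun y => ?_
        show a' ≤ u y + ↑n * dist x y
        by_cases hy : dist x y < δ
        · have h0 : a' < u y := hball y (by rwa [Metric.mem_ball, dist_comm])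
          have h2 : (0:ℝ) ≤ (n:ℝ) * dist x y := by positivity
          linarith
        · push_neg at hy
          have h1 := (abs_le.1 (hM y)).1
          have h3 : a' + M ≤ N * δ := by
            rw [div_le_iff₀ hδ] at hN; linarith
          have h4 : (N:ℝ) * δ ≤ (n:ℝ) * dist x y := by
            have h5 : (0:ℝ) ≤ (N:ℝ) := Nat.cast_nonneg N
            have h6 : (0:ℝ) < δ := hδ
            nlinarith
          linarith
      exact lt_of_lt_of_le ha1 key
    · intro b hb
      exact Eventually.of_forall fun n => lt_of_le_of_lt (hle n x) hb
  set ψ : ℕ → K → ℝ := fun j x => if j = 0 then g 0 x else g j x - g (j-1) x with hψ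
  have hpsum : ∀ (x : K) (n : ℕ), ∑ j ∈ Finset.range (n+1), ψ j x = g n x := by
    intro x n
    induction n with
    | zero => simp [hψ]
    | succ n ih =>
      rw [Finset.sum_range_succ, ih]
      have hn : ψ (n+1) x = g (n+1) x - g n x := by simp [hψ]
      rw [hn]; ring
  have hψc : ∀ j, Continuous (ψ j) := by
    intro j
    rcases Nat.eq_zero_or_pos j with h | h
    · subst h; simpa [hψ] using hcont 0
    · have hj : j ≠ 0 := Nat.pos_iff_ne_zero.mp h
      simp only [hψ, if_neg hj]
      exact (hcont j).sub (hcont (j-1))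
  have hψnn : ∀ (j : ℕ) (x : K), 0 ≤ ψ (j+1) x := by
    intro j x
    have hn : ψ (j+1) x = g (j+1) x - g j x := by simp [hψ]
    rw [hn]
    have := hmono x (Nat.le_succ j)
    simp only at this
    linarith
  have hg0 : ∀ x : K, |g 0 x| ≤ M := by
    intro x
    exact abs_le.2 ⟨hlb 0 x, (hle 0 x).trans (abs_le.1 (hM x)).2⟩
  have habssum : ∀ (x : K) (n : ℕ),
      ∑ j ∈ Finset.range (n+1), |ψ j x| = |g 0 x| + (g n x - g 0 x) := by
    intro x n
    induction n with
    | zero => simp [hψ]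
    | succ n ih =>
      rw [Finset.sum_range_succ, ih, abs_of_nonneg (hψnn n x)]
      have hn : ψ (n+1) x = g (n+1) x - g n x := by simp [hψ]
      rw [hn]; ring
  have hbound : ∀ (x : K) (n : ℕ), ∑ j ∈ Finset.range n, |ψ j x| ≤ 3 * M := by
    intro x n
    have hM0 : (0:ℝ) ≤ M := (abs_nonneg _).trans (hM x)
    rcases Nat.eq_zero_or_pos n with h | h
    · subst h; simp; linarith
    · obtain ⟨m, rfl⟩ := Nat.exists_eq_succ_of_ne_zero (Nat.pos_iff_ne_zero.mp h)
      rw [habssum x m]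
      have h2 := hg0 x
      have h3 := hlb 0 x
      have h4 := (hle m x).trans (abs_le.1 (hM x)).2
      linarith
  have hsummable : ∀ x : K, Summable fun j => |ψ j x| := fun x =>
    summable_of_sum_range_le (fun n => abs_nonneg _) (hbound x)
  refine ⟨ψ, hψc, ?_, fun x => (hsummable x).hasSum, fun x =>
    Real.tsum_le_of_sum_range_le (fun n => abs_nonneg _) (hbound x)⟩
  intro x
  have hsψ : Summable fun j => ψ j x := (hsummable x).of_abs
  rw [hsψ.hasSum_iff_tendsto_nat]
  rw [← Filter.tendsto_add_atTop_iff_nat 1]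
  have : (fun n => ∑ j ∈ Finset.range (n+1), ψ j x) = fun n => g n x := by
    funext n; exact hpsum x n
  rw [this]
  exact htend x

end Helpers

/-- Merging two continuous series representations (with absolute-sum control). -/
lemma merge_rep {K : Type*} [TopologicalSpace K] {a b : ℕ → K → ℂ} {Fa Fb : K → ℂ}
    {Sa Sb : K → ℝ}
    (hca : ∀ j, Continuous (a j)) (hcb : ∀ j, Continuous (b j))
    (hsa : ∀ x, HasSum (fun j => a j x) (Fa x)) (hsb : ∀ x, HasSum (fun j => b j x) (Fb x))
    (haa : ∀ x, HasSum (fun j => ‖a j x‖) (Sa x))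
    (hab : ∀ x, HasSum (fun j => ‖b j x‖) (Sb x)) :
    ∃ c : ℕ → K → ℂ, (∀ j, Continuous (c j)) ∧
      (∀ x, HasSum (fun j => c j x) (Fa x + Fb x)) ∧
      (∀ x, HasSum (fun j => ‖c j x‖) (Sa x + Sb x)) := by
  refine ⟨fun n x => if Even n then a (n/2) x else b (n/2) x, ?_, ?_, ?_⟩
  · intro n
    by_cases h : Even n
    · simpa [h] using hca (n/2)
    · simpa [h] using hcb (n/2)
  · intro x
    have h2 := hasSum_merge (hsa x) (hsb x)
    exact h2
  · intro x
    have h2 := hasSum_merge (haa x) (hab x)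
    simp only [apply_ite (norm : ℂ → ℝ)]
    exact h2
section DKdefs
variable {K : Type*} [MetricSpace K] [CompactSpace K]

/-- A bounded lower semicontinuous real function. -/
def BddLSC (u : K → ℝ) : Prop := LowerSemicontinuous u ∧ ∃ M : ℝ, ∀ x, |u x| ≤ M

/-- `f ∈ D(K)`: `f = (u₁ - u₂) + i(u₃ - u₄)` with the `uᵢ` bounded lower semicontinuous. -/
def MemDK (f : K → ℂ) : Prop :=
  ∃ u₁ u₂ u₃ u₄ : K → ℝ, BddLSC u₁ ∧ BddLSC u₂ ∧ BddLSC u₃ ∧ BddLSC u₄ ∧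
    ∀ x, f x = ((u₁ x - u₂ x : ℝ) : ℂ) + Complex.I * ((u₃ x - u₄ x : ℝ) : ℂ)

/-- `f ∈ D(K)` for real `f`: a difference of bounded lower semicontinuous functions. -/
def MemDKReal (f : K → ℝ) : Prop :=
  ∃ u₁ u₂ : K → ℝ, BddLSC u₁ ∧ BddLSC u₂ ∧ ∀ x, f x = u₁ x - u₂ x

/-- Upper semicontinuous envelope `Ug(x) = limsup_{y → x} g(y)` (non-exclusive limsup). -/
noncomputable def uscEnv (g : K → EReal) : K → EReal := fun x => limsup g (𝓝 x)

/-- The transfinite oscillations `osc_β f` of a complex-valued function. -/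
noncomputable def oscOrd (f : K → ℂ) (β : Ordinal) : K → EReal :=
  Ordinal.limitRecOn β (fun _ => (0 : EReal))
    (fun _ ih => uscEnv fun x =>
      limsup (fun y => ((‖f y - f x‖ : ℝ) : EReal) + ih y) (𝓝 x))
    (fun β _ ih => uscEnv fun x => ⨆ (α : Ordinal) (h : α < β), ih α h x)

/-- The transfinite oscillations `osc_β f` of a real-valued function. -/
noncomputable def oscOrdR (f : K → ℝ) (β : Ordinal) : K → EReal :=
  Ordinal.limitRecOn β (fun _ => (0 : EReal))
    (fun _ ih => uscEnv fun x =>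
      limsup (fun y => ((|f y - f x| : ℝ) : EReal) + ih y) (𝓝 x))
    (fun β _ ih => uscEnv fun x => ⨆ (α : Ordinal) (h : α < β), ih α h x)

/-- The positive transfinite oscillations `v_β f` of a real-valued function
(as `osc_β`, but with `f y - f x` in place of `|f y - f x|`). -/
noncomputable def vOrd (f : K → ℝ) (β : Ordinal) : K → EReal :=
  Ordinal.limitRecOn β (fun _ => (0 : EReal))
    (fun _ ih => uscEnv fun x =>
      limsup (fun y => ((f y - f x : ℝ) : EReal) + ih y) (𝓝 x))
    (fun β _ ih => uscEnv fun x => ⨆ (α : Ordinal) (h : α < β), ih α h x)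

/-- The `D(K)`-norm of a real function: the infimum of `sup_{x} Σ_j |φ_j x|` over all
pointwise representations `f = Σ_j φ_j` with `φ_j` continuous. -/
noncomputable def DNorm (f : K → ℝ) : ℝ :=
  sInf {M : ℝ | ∃ φ : ℕ → K → ℝ, (∀ j, Continuous (φ j)) ∧
    (∀ x, HasSum (fun j => φ j x) (f x)) ∧
    (∀ x, Summable fun j => |φ j x|) ∧ ∀ x, (∑' j, |φ j x|) ≤ M}

end DKdefs

set_option maxHeartbeats 1000000 in
/-- A bounded `f : K → ℂ` is in `D(K)` iff it admits a pointwise representation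
`f = Σ φ_j` with `φ_j` continuous and `sup_{k ∈ K} Σ_j |φ_j k| < ∞`. -/
theorem memDK_iff_series_rep {K : Type*} [MetricSpace K] [CompactSpace K]
    (f : K → ℂ) (hf : ∃ M : ℝ, ∀ x, ‖f x‖ ≤ M) :
    MemDK f ↔
      ∃ φ : ℕ → K → ℂ, (∀ j, Continuous (φ j)) ∧
        (∀ x, Summable fun j => ‖φ j x‖) ∧
        (∃ M : ℝ, ∀ x, (∑' j, ‖φ j x‖) ≤ M) ∧
        ∀ x, HasSum (fun j => φ j x) (f x) := by
  constructor
  · rintro ⟨u₁, u₂, u₃, u₄, ⟨h₁l, M₁, h₁b⟩, ⟨h₂l, M₂, h₂b⟩, ⟨h₃l, M₃, h₃b⟩, ⟨h₄l, M₄, h₄b⟩, heq⟩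
    obtain ⟨ψ₁, hc₁, hs₁, ha₁, hb₁⟩ := exists_rep_of_bddLSC h₁l h₁b
    obtain ⟨ψ₂, hc₂, hs₂, ha₂, hb₂⟩ := exists_rep_of_bddLSC h₂l h₂b
    obtain ⟨ψ₃, hc₃, hs₃, ha₃, hb₃⟩ := exists_rep_of_bddLSC h₃l h₃b
    obtain ⟨ψ₄, hc₄, hs₄, ha₄, hb₄⟩ := exists_rep_of_bddLSC h₄l h₄b
    obtain ⟨P, hPc, hPs, hPa⟩ := merge_rep (a := fun j x => ((ψ₁ j x : ℂ)))
      (b := fun j x => -((ψ₂ j x : ℂ)))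
      (fun j => Complex.continuous_ofReal.comp (hc₁ j))
      (fun j => (Complex.continuous_ofReal.comp (hc₂ j)).neg)
      (Fa := fun x => ((u₁ x : ℝ) : ℂ)) (Fb := fun x => -((u₂ x : ℝ) : ℂ))
      (fun x => Complex.hasSum_ofReal.2 (hs₁ x))
      (fun x => (Complex.hasSum_ofReal.2 (hs₂ x)).neg)
      (Sa := fun x => ∑' j, |ψ₁ j x|) (Sb := fun x => ∑' j, |ψ₂ j x|)
      (fun x => by simpa [Complex.norm_real, Real.norm_eq_abs] using ha₁ x)
      (fun x => by simpa [Complex.norm_real, Real.norm_eq_abs] using ha₂ x)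
    obtain ⟨Q, hQc, hQs, hQa⟩ := merge_rep (a := fun j x => Complex.I * ((ψ₃ j x : ℝ) : ℂ))
      (b := fun j x => -(Complex.I * ((ψ₄ j x : ℝ) : ℂ)))
      (fun j => continuous_const.mul (Complex.continuous_ofReal.comp (hc₃ j)))
      (fun j => (continuous_const.mul (Complex.continuous_ofReal.comp (hc₄ j))).neg)
      (Fa := fun x => Complex.I * ((u₃ x : ℝ) : ℂ)) (Fb := fun x => -(Complex.I * ((u₄ x : ℝ) : ℂ)))
      (fun x => (Complex.hasSum_ofReal.2 (hs₃ x)).mul_left Complex.I)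
      (fun x => ((Complex.hasSum_ofReal.2 (hs₄ x)).mul_left Complex.I).neg)
      (Sa := fun x => ∑' j, |ψ₃ j x|) (Sb := fun x => ∑' j, |ψ₄ j x|)
      (fun x => by simpa [Complex.norm_real, Real.norm_eq_abs, norm_mul, Complex.norm_I] using ha₃ x)
      (fun x => by simpa [Complex.norm_real, Real.norm_eq_abs, norm_mul, Complex.norm_I] using ha₄ x)
    obtain ⟨φ, hφc, hφs, hφa⟩ := merge_rep hPc hQc hPs hQs hPa hQa
    refine ⟨φ, hφc, fun x => (hφa x).summable,
      ⟨3*M₁ + 3*M₂ + 3*M₃ + 3*M₄, fun x => ?_⟩, fun x => ?_⟩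
    · rw [(hφa x).tsum_eq]
      have := hb₁ x; have := hb₂ x; have := hb₃ x; have := hb₄ x
      linarith
    · have h2 := hφs x
      have h3 : f x = (((u₁ x : ℝ) : ℂ) + -((u₂ x : ℝ) : ℂ)) +
          (Complex.I * ((u₃ x : ℝ) : ℂ) + -(Complex.I * ((u₄ x : ℝ) : ℂ))) := by
        rw [heq x]; push_cast; ring
      rw [h3]; exact h2
  · rintro ⟨φ, hcont, hsummabs, ⟨M, hMb⟩, hsum⟩
    set g₁ : ℕ → K → ℝ := fun j x => max ((φ j x).re) 0 with hg₁
    set g₂ : ℕ → K → ℝ := fun j x => max (-(φ j x).re) 0 with hg₂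
    set g₃ : ℕ → K → ℝ := fun j x => max ((φ j x).im) 0 with hg₃
    set g₄ : ℕ → K → ℝ := fun j x => max (-(φ j x).im) 0 with hg₄
    have hgc : (∀ j, Continuous (g₁ j)) ∧ (∀ j, Continuous (g₂ j)) ∧
        (∀ j, Continuous (g₃ j)) ∧ (∀ j, Continuous (g₄ j)) := by
      refine ⟨fun j => ?_, fun j => ?_, fun j => ?_, fun j => ?_⟩ <;>
        · apply Continuous.max _ continuous_const
          first
            | exact Complex.continuous_re.comp (hcont j)
            | exact (Complex.continuous_re.comp (hcont j)).neg
            | exact Complex.continuous_im.comp (hcont j)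
            | exact (Complex.continuous_im.comp (hcont j)).neg
    obtain ⟨hgc₁, hgc₂, hgc₃, hgc₄⟩ := hgc
    have hnn₁ : ∀ j x, 0 ≤ g₁ j x := fun j x => le_max_right _ _
    have hnn₂ : ∀ j x, 0 ≤ g₂ j x := fun j x => le_max_right _ _
    have hnn₃ : ∀ j x, 0 ≤ g₃ j x := fun j x => le_max_right _ _
    have hnn₄ : ∀ j x, 0 ≤ g₄ j x := fun j x => le_max_right _ _
    have hle₁ : ∀ j x, g₁ j x ≤ ‖φ j x‖ := fun j x =>
      max_le (Complex.re_le_norm _) (norm_nonneg _)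
    have hle₂ : ∀ j x, g₂ j x ≤ ‖φ j x‖ := fun j x =>
      max_le ((neg_le_abs _).trans (Complex.abs_re_le_norm _)) (norm_nonneg _)
    have hle₃ : ∀ j x, g₃ j x ≤ ‖φ j x‖ := fun j x =>
      max_le ((le_abs_self _).trans (Complex.abs_im_le_norm _)) (norm_nonneg _)
    have hle₄ : ∀ j x, g₄ j x ≤ ‖φ j x‖ := fun j x =>
      max_le ((neg_le_abs _).trans (Complex.abs_im_le_norm _)) (norm_nonneg _)
    have hsg₁ : ∀ x, Summable fun j => g₁ j x := fun x =>
      Summable.of_nonneg_of_le (fun j => hnn₁ j x) (fun j => hle₁ j x) (hsummabs x)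
    have hsg₂ : ∀ x, Summable fun j => g₂ j x := fun x =>
      Summable.of_nonneg_of_le (fun j => hnn₂ j x) (fun j => hle₂ j x) (hsummabs x)
    have hsg₃ : ∀ x, Summable fun j => g₃ j x := fun x =>
      Summable.of_nonneg_of_le (fun j => hnn₃ j x) (fun j => hle₃ j x) (hsummabs x)
    have hsg₄ : ∀ x, Summable fun j => g₄ j x := fun x =>
      Summable.of_nonneg_of_le (fun j => hnn₄ j x) (fun j => hle₄ j x) (hsummabs x)
    have hb : ∀ (g : ℕ → K → ℝ), (∀ j x, 0 ≤ g j x) → (∀ j x, g j x ≤ ‖φ j x‖) →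
        (∀ x, Summable fun j => g j x) → ∀ x, |∑' j, g j x| ≤ M := by
      intro g hnn hle hsg x
      have h0 : 0 ≤ ∑' j, g j x := tsum_nonneg fun j => hnn j x
      have h1 : (∑' j, g j x) ≤ ∑' j, ‖φ j x‖ :=
        Summable.tsum_le_tsum (fun j => hle j x) (hsg x) (hsummabs x)
      have h2 := hMb x
      exact abs_le.2 ⟨by linarith, by linarith⟩
    refine ⟨fun x => ∑' j, g₁ j x, fun x => ∑' j, g₂ j x, fun x => ∑' j, g₃ j x,
      fun x => ∑' j, g₄ j x,
      ⟨lowerSemicontinuous_tsum' hgc₁ hnn₁ hsg₁, M, hb g₁ hnn₁ hle₁ hsg₁⟩,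
      ⟨lowerSemicontinuous_tsum' hgc₂ hnn₂ hsg₂, M, hb g₂ hnn₂ hle₂ hsg₂⟩,
      ⟨lowerSemicontinuous_tsum' hgc₃ hnn₃ hsg₃, M, hb g₃ hnn₃ hle₃ hsg₃⟩,
      ⟨lowerSemicontinuous_tsum' hgc₄ hnn₄ hsg₄, M, hb g₄ hnn₄ hle₄ hsg₄⟩, ?_⟩
    intro x
    have hre : (∑' j, g₁ j x) - (∑' j, g₂ j x) = (f x).re := by
      rw [← Summable.tsum_sub (hsg₁ x) (hsg₂ x)]
      have he : (fun j => g₁ j x - g₂ j x) = fun j => (φ j x).re := by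
        funext j
        simp only [hg₁, hg₂]
        exact max_zero_sub_max_neg_zero_eq_self ((φ j x).re)
      rw [he, (Complex.hasSum_re (hsum x)).tsum_eq]
    have him : (∑' j, g₃ j x) - (∑' j, g₄ j x) = (f x).im := by
      rw [← Summable.tsum_sub (hsg₃ x) (hsg₄ x)]
      have he : (fun j => g₃ j x - g₄ j x) = fun j => (φ j x).im := by
        funext j
        simp only [hg₃, hg₄]
        exact max_zero_sub_max_neg_zero_eq_self ((φ j x).im)
      rw [he, (Complex.hasSum_im (hsum x)).tsum_eq]
    rw [hre, him, mul_comm]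
    exact (Complex.re_add_im (f x)).symm
end

section
/- A sequence (b_j) in a Banach space is strongly summing if and only if its difference sequence (e_j), defined by e₁ = b₁ and e_j = b_j - b_{j-1} for j > 1, is coefficient converging. -/
open Filter Topology

/-- The difference sequence of (b_j): e₁ = b₁ and e_j = b_j - b_{j-1}. -/
def diffSeq {B : Type*} [NormedAddCommGroup B] (b : ℕ → B) : ℕ → B
  | 0 => b 0
  | (k + 1) => b (k + 1) - b k


section AuxLemmas
variable {𝕜 : Type*} [RCLike 𝕜] {B : Type*} [NormedAddCommGroup B] [NormedSpace 𝕜 B]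

lemma diffSeq_sum (b : ℕ → B) (n : ℕ) :
    ∑ j ∈ Finset.range (n + 1), diffSeq b j = b n := by
  induction n with
  | zero => simp [diffSeq]
  | succ n ih => rw [Finset.sum_range_succ, ih]; simp [diffSeq]

lemma identI (b : ℕ → B) (d : ℕ → 𝕜) (n : ℕ) :
    ∑ i ∈ Finset.range n, d i • diffSeq b i
      = ∑ i ∈ Finset.range n, (d i - d (i + 1)) • b i
        + d n • ∑ i ∈ Finset.range n, diffSeq b i := by
  induction n with
  | zero => simp
  | succ n ih =>
    have hS : ∑ i ∈ Finset.range n, diffSeq b i + diffSeq b n = b n := by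
      rw [← Finset.sum_range_succ]; exact diffSeq_sum b n
    rw [Finset.sum_range_succ, ih, Finset.sum_range_succ (f := fun i => (d i - d (i+1)) • b i)]
    have he : diffSeq b n = b n - ∑ i ∈ Finset.range n, diffSeq b i := by
      rw [← hS]; abel
    rw [he]
    have hB : ∑ i ∈ Finset.range (n+1), diffSeq b i = b n := diffSeq_sum b n
    rw [hB]
    set S := ∑ i ∈ Finset.range n, diffSeq b i
    set A := ∑ i ∈ Finset.range n, (d i - d (i+1)) • b i
    module

lemma keyc1 (b : ℕ → B) (d : ℕ → 𝕜) (m : ℕ) :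
    ∑ i ∈ Finset.range (m+1), (if i = m then d m else d i - d (i+1)) • b i
      = ∑ i ∈ Finset.range (m+1), d i • diffSeq b i := by
  rw [identI b d (m+1), diffSeq_sum, Finset.sum_range_succ,
    Finset.sum_range_succ (f := fun i => (d i - d (i+1)) • b i), if_pos rfl]
  have h1 : ∀ i ∈ Finset.range m,
      (if i = m then d m else d i - d (i+1)) • b i = (d i - d (i+1)) • b i := fun i hi => by
    rw [if_neg (Nat.ne_of_lt (Finset.mem_range.mp hi))]
  rw [Finset.sum_congr rfl h1]
  set A := ∑ i ∈ Finset.range m, (d i - d (i+1)) • b i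
  module

lemma keyc2 (d : ℕ → 𝕜) (m k : ℕ) (hk : k ≤ m) :
    ∑ j ∈ Finset.range k, (if j = m then d m else d j - d (j+1)) = d 0 - d k := by
  have h1 : ∀ j ∈ Finset.range k,
      (if j = m then d m else d j - d (j+1)) = d j - d (j+1) := fun j hj => by
    rw [if_neg (Nat.ne_of_lt (lt_of_lt_of_le (Finset.mem_range.mp hj) hk))]
  rw [Finset.sum_congr rfl h1, Finset.sum_range_sub' d k]

lemma keyc3 (d : ℕ → 𝕜) (m : ℕ) :
    ∑ j ∈ Finset.range (m+1), (if j = m then d m else d j - d (j+1)) = d 0 := by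
  rw [Finset.sum_range_succ, keyc2 d m m le_rfl, if_pos rfl]
  ring

lemma weakCauchy_norm_bound {x : ℕ → B} (h : WeakCauchy 𝕜 x) :
    ∃ C : ℝ, 0 ≤ C ∧ ∀ n, ‖x n‖ ≤ C := by
  set g : ℕ → (StrongDual 𝕜 B) →L[𝕜] 𝕜 :=
    fun n => NormedSpace.inclusionInDoubleDual 𝕜 B (x n) with hg
  have hpt : ∀ f : StrongDual 𝕜 B, ∃ C, ∀ n, ‖g n f‖ ≤ C := by
    intro f
    obtain ⟨l, hl⟩ := h f
    obtain ⟨C, hC⟩ := hl.norm.bddAbove_range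
    exact ⟨C, fun n => hC (Set.mem_range_self n)⟩
  obtain ⟨C, hC⟩ := banach_steinhaus hpt
  refine ⟨max C 0, le_max_right _ _, fun n => ?_⟩
  have h1 : ‖g n‖ = ‖x n‖ := (NormedSpace.inclusionInDoubleDualLi 𝕜).norm_map (x n)
  have := hC n
  rw [h1] at this
  exact this.trans (le_max_left _ _)

lemma coef_bound [CompleteSpace B] (x : ℕ → B) (hx : ∀ j, x j ≠ 0) (Λ : ℝ)
    (hb : ∀ (c : ℕ → 𝕜) (k n : ℕ), k ≤ n →
      ‖∑ i ∈ Finset.range k, c i • x i‖ ≤ Λ * ‖∑ i ∈ Finset.range n, c i • x i‖)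
    (F : ℕ → Finset ℕ)
    (H : ∀ c : ℕ → 𝕜, (∃ M : ℝ, ∀ n, ‖∑ j ∈ Finset.range n, c j • x j‖ ≤ M) →
      ∃ l : 𝕜, Tendsto (fun n => ∑ j ∈ F n, c j) atTop (𝓝 l)) :
    ∃ K : ℝ, 0 ≤ K ∧ ∀ (c : ℕ → 𝕜) (m n : ℕ), F m ⊆ Finset.range n →
      ‖∑ j ∈ F m, c j‖ ≤ K * ‖∑ i ∈ Finset.range n, c i • x i‖ := by
  classical
  set W : Submodule 𝕜 (BoundedContinuousFunction ℕ B) :=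
    { carrier := {f | f 0 = 0 ∧ ∀ n, f (n + 1) - f n ∈ 𝕜 ∙ x n}
      add_mem' := by
        rintro f g ⟨hf0, hf⟩ ⟨hg0, hg⟩
        refine ⟨by simp [hf0, hg0], fun n => ?_⟩
        have := Submodule.add_mem _ (hf n) (hg n)
        convert this using 1
        simp only [BoundedContinuousFunction.coe_add, Pi.add_apply]
        abel
      zero_mem' := by
        refine ⟨rfl, fun n => ?_⟩
        simp
      smul_mem' := by
        rintro a f ⟨hf0, hf⟩
        refine ⟨by simp [hf0], fun n => ?_⟩
        have := Submodule.smul_mem _ a (hf n)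
        convert this using 1
        simp only [BoundedContinuousFunction.coe_smul, Pi.smul_apply]
        rw [smul_sub] } with hWdef
  have memW : ∀ f : BoundedContinuousFunction ℕ B,
      f ∈ W ↔ (f 0 = 0 ∧ ∀ n, f (n + 1) - f n ∈ 𝕜 ∙ x n) := fun f => Iff.rfl
  have hWclosed : IsClosed (W : Set (BoundedContinuousFunction ℕ B)) := by
    have h1 : IsClosed {f : BoundedContinuousFunction ℕ B | f 0 = 0} :=
      isClosed_singleton.preimage (continuous_eval_const _)
    have h2 : ∀ n, IsClosed {f : BoundedContinuousFunction ℕ B | f (n+1) - f n ∈ 𝕜 ∙ x n} :=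
      fun n => (Submodule.closed_of_finiteDimensional _).preimage
        ((continuous_eval_const _).sub
          (continuous_eval_const _))
    have hset : (W : Set (BoundedContinuousFunction ℕ B))
        = {f | f 0 = 0} ∩ ⋂ n, {f | f (n+1) - f n ∈ 𝕜 ∙ x n} := by
      ext f
      simp only [SetLike.mem_coe, memW, Set.mem_inter_iff, Set.mem_iInter, Set.mem_setOf_eq]
    rw [hset]
    exact h1.inter (isClosed_iInter h2)
  haveI : CompleteSpace W := hWclosed.completeSpace_coe
  have hcoef : ∀ f : W, ∀ n, ∃ t : 𝕜,
      (f : BoundedContinuousFunction ℕ B) (n+1) - (f : BoundedContinuousFunction ℕ B) n = t • x n := by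
    intro f n
    obtain ⟨t, ht⟩ := Submodule.mem_span_singleton.mp (f.2.2 n)
    exact ⟨t, ht.symm⟩
  choose coef hcoefspec using hcoef
  have coef_unique : ∀ (f : W) (n : ℕ) (t : 𝕜),
      (f : BoundedContinuousFunction ℕ B) (n+1) - (f : BoundedContinuousFunction ℕ B) n = t • x n →
      t = coef f n := by
    intro f n t ht
    exact smul_left_injective 𝕜 (hx n) (ht.symm.trans (hcoefspec f n))
  have coef_sum : ∀ (f : W) (n : ℕ),
      ∑ j ∈ Finset.range n, coef f j • x j = (f : BoundedContinuousFunction ℕ B) n := by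
    intro f n
    induction n with
    | zero => simpa using (f.2.1).symm
    | succ n ih =>
      rw [Finset.sum_range_succ, ih, ← hcoefspec f n]
      abel
  have coef_add : ∀ (f g : W) (n : ℕ), coef (f + g) n = coef f n + coef g n := by
    intro f g n
    refine (coef_unique (f + g) n _ ?_).symm
    have h1 := hcoefspec f n
    have h2 := hcoefspec g n
    simp only [Submodule.coe_add, BoundedContinuousFunction.coe_add, Pi.add_apply]
    rw [add_smul, ← h1, ← h2]
    abel
  have coef_smul : ∀ (a : 𝕜) (f : W) (n : ℕ), coef (a • f) n = a * coef f n := by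
    intro a f n
    refine (coef_unique (a • f) n _ ?_).symm
    have h1 := hcoefspec f n
    simp only [Submodule.coe_smul, BoundedContinuousFunction.coe_smul, Pi.smul_apply]
    rw [mul_smul, ← h1, smul_sub]
  have coefbound : ∀ (f : W) (n : ℕ), ‖coef f n‖ ≤ 2 / ‖x n‖ * ‖f‖ := by
    intro f n
    have hxn : (0:ℝ) < ‖x n‖ := norm_pos_iff.mpr (hx n)
    rw [div_mul_eq_mul_div, le_div_iff₀ hxn, ← norm_smul, ← hcoefspec f n]
    have h1 : ‖(f : BoundedContinuousFunction ℕ B) (n+1)‖ ≤ ‖f‖ :=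
      BoundedContinuousFunction.norm_coe_le_norm _ _
    have h2 : ‖(f : BoundedContinuousFunction ℕ B) n‖ ≤ ‖f‖ :=
      BoundedContinuousFunction.norm_coe_le_norm _ _
    calc ‖(f : BoundedContinuousFunction ℕ B) (n+1) - (f : BoundedContinuousFunction ℕ B) n‖
        ≤ ‖(f : BoundedContinuousFunction ℕ B) (n+1)‖ + ‖(f : BoundedContinuousFunction ℕ B) n‖ :=
          norm_sub_le _ _
      _ ≤ 2 * ‖f‖ := by linarith
  let φl : ℕ → W →ₗ[𝕜] 𝕜 := fun m =>
    { toFun := fun f => ∑ j ∈ F m, coef f j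
      map_add' := by intro f g; simp [coef_add, Finset.sum_add_distrib]
      map_smul' := by intro a f; simp [coef_smul, Finset.mul_sum] }
  have φbound : ∀ (m : ℕ) (f : W), ‖φl m f‖ ≤ (∑ j ∈ F m, 2 / ‖x j‖) * ‖f‖ := by
    intro m f
    calc ‖∑ j ∈ F m, coef f j‖ ≤ ∑ j ∈ F m, ‖coef f j‖ := norm_sum_le _ _
      _ ≤ ∑ j ∈ F m, 2 / ‖x j‖ * ‖f‖ := Finset.sum_le_sum fun j _ => coefbound f j
      _ = _ := by rw [← Finset.sum_mul]
  let φ : ℕ → W →L[𝕜] 𝕜 := fun m => (φl m).mkContinuous _ (φbound m)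
  have hpt : ∀ f : W, ∃ C, ∀ m, ‖φ m f‖ ≤ C := by
    intro f
    obtain ⟨l, hl⟩ := H (fun j => coef f j)
      ⟨‖f‖, fun n => by
        rw [coef_sum]
        exact BoundedContinuousFunction.norm_coe_le_norm _ _⟩
    obtain ⟨C, hC⟩ := hl.norm.bddAbove_range
    exact ⟨C, fun m => hC (Set.mem_range_self m)⟩
  obtain ⟨K', hK'⟩ := banach_steinhaus hpt
  have hK'0 : (0:ℝ) ≤ K' := le_trans (norm_nonneg _) (hK' 0)
  set L : ℝ := max Λ 1 with hL
  have hL0 : (0:ℝ) ≤ L := le_trans zero_le_one (le_max_right _ _)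
  refine ⟨K' * L, mul_nonneg hK'0 hL0, ?_⟩
  intro c m n hFm
  set Sn := ∑ i ∈ Finset.range n, c i • x i with hSn
  have hS : ∀ m', ‖∑ i ∈ Finset.range (min m' n), c i • x i‖ ≤ L * ‖Sn‖ := by
    intro m'
    rcases le_or_gt n m' with h | h
    · rw [min_eq_right h]
      calc ‖Sn‖ = 1 * ‖Sn‖ := (one_mul _).symm
        _ ≤ L * ‖Sn‖ := mul_le_mul_of_nonneg_right (le_max_right _ _) (norm_nonneg _)
    · rw [min_eq_left h.le]
      exact le_trans (hb c m' n h.le)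
        (mul_le_mul_of_nonneg_right (le_max_left _ _) (norm_nonneg _))
  let f0 : ℕ → B := fun m' => ∑ i ∈ Finset.range (min m' n), c i • x i
  let fb : BoundedContinuousFunction ℕ B :=
    BoundedContinuousFunction.ofNormedAddCommGroup f0 continuous_of_discreteTopology
      (L * ‖Sn‖) hS
  have hfbap : ∀ m', fb m' = ∑ i ∈ Finset.range (min m' n), c i • x i := fun m' => rfl
  have hfbW : fb ∈ W := by
    refine ⟨by simp [hfbap], fun m' => ?_⟩
    rcases lt_or_ge m' n with h | h
    · have h1 : min (m' + 1) n = m' + 1 := min_eq_left (Nat.succ_le_of_lt h)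
      have h2 : min m' n = m' := min_eq_left h.le
      have heq : fb (m' + 1) - fb m' = c m' • x m' := by
        rw [hfbap, hfbap, h1, h2, Finset.sum_range_succ]
        abel
      rw [heq]
      exact Submodule.smul_mem _ _ (Submodule.mem_span_singleton_self (x m'))
    · have h1 : min (m' + 1) n = n := min_eq_right (le_trans h (Nat.le_succ _))
      have h2 : min m' n = n := min_eq_right h
      have heq : fb (m' + 1) - fb m' = 0 := by rw [hfbap, hfbap, h1, h2, sub_self]
      rw [heq]
      exact Submodule.zero_mem _
  set fW : W := ⟨fb, hfbW⟩ with hfW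
  have hcoefc : ∀ j, j < n → coef fW j = c j := by
    intro j hj
    refine (coef_unique fW j (c j) ?_).symm
    show fb (j + 1) - fb j = c j • x j
    have h1 : min (j + 1) n = j + 1 := min_eq_left (Nat.succ_le_of_lt hj)
    have h2 : min j n = j := min_eq_left hj.le
    rw [hfbap, hfbap, h1, h2, Finset.sum_range_succ]
    abel
  have heq : φ m fW = ∑ j ∈ F m, c j := by
    show ∑ j ∈ F m, coef fW j = ∑ j ∈ F m, c j
    exact Finset.sum_congr rfl fun j hj => hcoefc j (Finset.mem_range.mp (hFm hj))
  have hnorm : ‖fW‖ ≤ L * ‖Sn‖ := by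
    show ‖fb‖ ≤ L * ‖Sn‖
    exact BoundedContinuousFunction.norm_ofNormedAddCommGroup_le _
      (mul_nonneg hL0 (norm_nonneg _)) _
  calc ‖∑ j ∈ F m, c j‖ = ‖φ m fW‖ := by rw [heq]
    _ ≤ ‖φ m‖ * ‖fW‖ := (φ m).le_opNorm fW
    _ ≤ K' * (L * ‖Sn‖) := mul_le_mul (hK' m) hnorm (norm_nonneg _) hK'0
    _ = K' * L * ‖Sn‖ := by ring

end AuxLemmas

/-- (b_j) is strongly summing iff its difference sequence is coefficient converging. -/
theorem stronglySumming_iff_diffSeq_coeffConverging {𝕜 : Type*} [RCLike 𝕜] {B : Type*}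
    [NormedAddCommGroup B] [NormedSpace 𝕜 B] [CompleteSpace B] (b : ℕ → B) :
    StronglySumming 𝕜 b ↔ CoeffConverging 𝕜 (diffSeq b) := by
  constructor
  · rintro ⟨hwc, ⟨hbne, Λb, hΛb⟩, hsum⟩
    obtain ⟨Cb, hCb0, hCb⟩ := weakCauchy_norm_bound hwc
    have hBe : ∀ n, ‖∑ i ∈ Finset.range n, diffSeq b i‖ ≤ Cb := by
      intro n
      cases n with
      | zero => simpa using hCb0
      | succ m => rw [diffSeq_sum]; exact hCb m
    obtain ⟨K, hK0, hK⟩ := coef_bound b hbne Λb hΛb (fun n => Finset.range n) hsum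
    -- uniform coefficient bound
    have hdk : ∀ (d : ℕ → 𝕜) (k m : ℕ), k ≤ m →
        ‖d k‖ ≤ 2 * K * ‖∑ i ∈ Finset.range (m+1), d i • diffSeq b i‖ := by
      intro d k m hkm
      set c' : ℕ → 𝕜 := fun i => if i = m then d m else d i - d (i+1) with hc'
      have h1 : ‖∑ j ∈ Finset.range (m+1), c' j‖
          ≤ K * ‖∑ i ∈ Finset.range (m+1), c' i • b i‖ :=
        hK c' (m+1) (m+1) subset_rfl
      have h2 : ‖∑ j ∈ Finset.range k, c' j‖
          ≤ K * ‖∑ i ∈ Finset.range (m+1), c' i • b i‖ :=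
        hK c' k (m+1) (Finset.range_subset_range.mpr (by omega))
      rw [keyc1 b d m] at h1 h2
      rw [keyc3 d m] at h1
      rw [keyc2 d m k hkm] at h2
      have h3 : d k = d 0 - (d 0 - d k) := by ring
      calc ‖d k‖ = ‖d 0 - (d 0 - d k)‖ := by rw [← h3]
        _ ≤ ‖d 0‖ + ‖d 0 - d k‖ := norm_sub_le _ _
        _ ≤ 2 * K * ‖∑ i ∈ Finset.range (m+1), d i • diffSeq b i‖ := by linarith
    have hene : ∀ j, diffSeq b j ≠ 0 := by
      intro j
      cases j with
      | zero => exact hbne 0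
      | succ m =>
        intro h0
        have hbb : b (m+1) = b m := by
          have h1 : b (m+1) - b m = 0 := h0
          rwa [sub_eq_zero] at h1
        set c : ℕ → 𝕜 := fun i => if i = m then 1 else if i = m+1 then -1 else 0 with hc
        have h1 : ∑ i ∈ Finset.range (m+1), c i • b i = b m := by
          rw [Finset.sum_eq_single_of_mem m (Finset.self_mem_range_succ m)]
          · simp [hc]
          · intro i hi hne
            have : i ≠ m + 1 := by
              have := Finset.mem_range.mp hi; omega
            simp [hc, hne, this]
        have h2 : ∑ i ∈ Finset.range (m+2), c i • b i = 0 := by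
          rw [Finset.sum_range_succ, h1]
          have : c (m+1) = -1 := by simp [hc]
          rw [this, hbb]
          simp
        have h3 := hΛb c (m+1) (m+2) (by omega)
        rw [h1, h2] at h3
        simp only [norm_zero, mul_zero] at h3
        exact hbne m (norm_le_zero_iff.mp h3)
    refine ⟨⟨hene, max (Λb + 2*K*Cb) 1, ?_⟩, ?_, ?_⟩
    · -- basic sequence constant for e
      intro d k n hkn
      rcases Nat.eq_zero_or_pos n with hn0 | hnpos
      · subst hn0
        have hk0 : k = 0 := Nat.le_zero.mp hkn
        subst hk0
        simp
      rcases eq_or_lt_of_le hkn with heq | hlt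
      · subst heq
        calc ‖∑ i ∈ Finset.range k, d i • diffSeq b i‖
            = 1 * ‖∑ i ∈ Finset.range k, d i • diffSeq b i‖ := (one_mul _).symm
          _ ≤ _ := mul_le_mul_of_nonneg_right (le_max_right _ _) (norm_nonneg _)
      · obtain ⟨m, rfl⟩ : ∃ m, n = m + 1 := ⟨n - 1, by omega⟩
        have hkm : k ≤ m := by omega
        set c' : ℕ → 𝕜 := fun i => if i = m then d m else d i - d (i+1) with hc'
        set En := ‖∑ i ∈ Finset.range (m+1), d i • diffSeq b i‖ with hEn
        have hdkb : ‖d k‖ ≤ 2 * K * En := hdk d k m hkm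
        have hck : ∀ i ∈ Finset.range k, (d i - d (i+1)) • b i = c' i • b i := by
          intro i hi
          have : i ≠ m := by have := Finset.mem_range.mp hi; omega
          simp [hc', this]
        have hSk : ‖∑ i ∈ Finset.range k, (d i - d (i+1)) • b i‖ ≤ Λb * En := by
          rw [Finset.sum_congr rfl hck]
          calc ‖∑ i ∈ Finset.range k, c' i • b i‖
              ≤ Λb * ‖∑ i ∈ Finset.range (m+1), c' i • b i‖ := hΛb c' k (m+1) (by omega)
            _ = Λb * En := by rw [keyc1 b d m]
        have hid := identI b d k
        calc ‖∑ i ∈ Finset.range k, d i • diffSeq b i‖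
            = ‖∑ i ∈ Finset.range k, (d i - d (i+1)) • b i
                + d k • ∑ i ∈ Finset.range k, diffSeq b i‖ := by rw [hid]
          _ ≤ ‖∑ i ∈ Finset.range k, (d i - d (i+1)) • b i‖
                + ‖d k‖ * ‖∑ i ∈ Finset.range k, diffSeq b i‖ := by
              refine le_trans (norm_add_le _ _) ?_
              rw [norm_smul]
          _ ≤ Λb * En + (2 * K * En) * Cb := by
              have h4 : ‖d k‖ * ‖∑ i ∈ Finset.range k, diffSeq b i‖ ≤ (2 * K * En) * Cb :=
                mul_le_mul hdkb (hBe k) (norm_nonneg _)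
                  (by positivity)
              linarith
          _ = (Λb + 2*K*Cb) * En := by ring
          _ ≤ max (Λb + 2*K*Cb) 1 * En :=
              mul_le_mul_of_nonneg_right (le_max_left _ _) (norm_nonneg _)
    · -- weak Cauchy of partial sums
      intro f
      obtain ⟨l, hl⟩ := hwc f
      exact ⟨l, by simpa only [diffSeq_sum] using hl⟩
    · -- coefficient convergence
      rintro d ⟨M, hM⟩
      have hd : ∀ k, ‖d k‖ ≤ 2*K*M := by
        intro k
        refine le_trans (hdk d k k le_rfl) ?_
        have := hM (k+1)
        nlinarith [hK0]
      set c : ℕ → 𝕜 := fun i => d i - d (i+1) with hc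
      have hSc : ∀ n, ‖∑ j ∈ Finset.range n, c j • b j‖ ≤ M + 2*K*M*Cb := by
        intro n
        have hid := identI b d n
        have heq2 : ∑ j ∈ Finset.range n, c j • b j
            = ∑ i ∈ Finset.range n, d i • diffSeq b i
              - d n • ∑ i ∈ Finset.range n, diffSeq b i := by
          rw [hid]; abel
        rw [heq2]
        calc ‖∑ i ∈ Finset.range n, d i • diffSeq b i
              - d n • ∑ i ∈ Finset.range n, diffSeq b i‖
            ≤ ‖∑ i ∈ Finset.range n, d i • diffSeq b i‖
              + ‖d n‖ * ‖∑ i ∈ Finset.range n, diffSeq b i‖ := by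
              refine le_trans (norm_sub_le _ _) ?_
              rw [norm_smul]
          _ ≤ M + (2*K*M) * Cb := by
              have h4 : ‖d n‖ * ‖∑ i ∈ Finset.range n, diffSeq b i‖ ≤ (2*K*M) * Cb := by
                refine mul_le_mul (hd n) (hBe n) (norm_nonneg _) ?_
                have := norm_nonneg (d n)
                nlinarith [hd n]
              have := hM n
              linarith
          _ = M + 2*K*M*Cb := by ring
      obtain ⟨l, hl⟩ := hsum c ⟨M + 2*K*M*Cb, hSc⟩
      have hsub : (fun n => ∑ j ∈ Finset.range n, c j) = fun n => d 0 - d n := by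
        funext n; exact Finset.sum_range_sub' d n
      rw [hsub] at hl
      refine ⟨d 0 - l, ?_⟩
      have h2 := (tendsto_const_nhds (x := d 0) (f := atTop)).sub hl
      simpa using h2
  · rintro ⟨⟨hene, Λe, hΛe⟩, hwce, hconv⟩
    obtain ⟨Cb, hCb0, hCb⟩ := weakCauchy_norm_bound hwce
    have hBe : ∀ n, ‖∑ i ∈ Finset.range n, diffSeq b i‖ ≤ Cb := by
      intro n
      cases n with
      | zero => simpa using hCb0
      | succ m => exact hCb m
    have he0 : (0:ℝ) < ‖diffSeq b 0‖ := norm_pos_iff.mpr (hene 0)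
    have hΛe1 : (1:ℝ) ≤ Λe := by
      have h := hΛe (fun _ => (1:𝕜)) 1 1 le_rfl
      simp only [Finset.sum_range_one, one_smul] at h
      nlinarith
    obtain ⟨Ke, hKe0, hKe⟩ := coef_bound (diffSeq b) hene Λe hΛe (fun m => {m}) (by
      intro c hc
      obtain ⟨l, hl⟩ := hconv c hc
      exact ⟨l, by simpa using hl⟩)
    have htau : ∀ (c : ℕ → 𝕜) (n : ℕ),
        ‖∑ j ∈ Finset.range n, c j‖ * ‖diffSeq b 0‖
          ≤ Λe * ‖∑ i ∈ Finset.range n, c i • b i‖ := by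
      intro c n
      cases n with
      | zero => simp
      | succ m =>
        set d : ℕ → 𝕜 :=
          fun i => (∑ j ∈ Finset.range (m+1), c j) - ∑ j ∈ Finset.range i, c j with hd
        have hde : ∑ i ∈ Finset.range (m+1), d i • diffSeq b i
            = ∑ i ∈ Finset.range (m+1), c i • b i := by
          rw [identI b d (m+1)]
          have h1 : ∀ i ∈ Finset.range (m+1), (d i - d (i+1)) • b i = c i • b i := by
            intro i _
            have h0 : d i - d (i+1) = c i := by
              simp only [hd]
              rw [Finset.sum_range_succ c i]
              ring
            rw [h0]
          have h2 : d (m+1) = 0 := by simp [hd]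
          rw [Finset.sum_congr rfl h1, h2, zero_smul, add_zero]
        have h3 := hΛe d 1 (m+1) (by omega)
        rw [hde] at h3
        simp only [Finset.sum_range_one] at h3
        have h4 : d 0 = ∑ j ∈ Finset.range (m+1), c j := by simp [hd]
        rw [norm_smul, h4] at h3
        exact h3
    have hbne : ∀ j, b j ≠ 0 := by
      intro j hbj
      have h1 : ∑ i ∈ Finset.range (j+1), (1:𝕜) • diffSeq b i = 0 := by
        simp only [one_smul]
        rw [diffSeq_sum, hbj]
      have h2 := hΛe (fun _ => (1:𝕜)) 1 (j+1) (by omega)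
      rw [h1] at h2
      simp only [Finset.sum_range_one, one_smul, norm_zero, mul_zero] at h2
      exact hene 0 (norm_le_zero_iff.mp h2)
    have hPS : ∀ (c : ℕ → 𝕜) (m : ℕ),
        ∑ i ∈ Finset.range m, c i • b i
          = (∑ j ∈ Finset.range m, c j) • (∑ i ∈ Finset.range m, diffSeq b i)
            - ∑ i ∈ Finset.range m, (∑ j ∈ Finset.range i, c j) • diffSeq b i := by
      intro c m
      have hid := identI b (fun i => ∑ j ∈ Finset.range i, c j) m
      have h2 : ∑ i ∈ Finset.range m,
            ((∑ j ∈ Finset.range i, c j) - ∑ j ∈ Finset.range (i+1), c j) • b i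
          = -∑ i ∈ Finset.range m, c i • b i := by
        rw [← Finset.sum_neg_distrib]
        refine Finset.sum_congr rfl fun i _ => ?_
        have h0 : (∑ j ∈ Finset.range i, c j) - ∑ j ∈ Finset.range (i+1), c j = -c i := by
          rw [Finset.sum_range_succ]; ring
        rw [h0, neg_smul]
      rw [h2] at hid
      rw [hid]
      abel
    have hΛb : ∀ (c : ℕ → 𝕜) (k n : ℕ), k ≤ n →
        ‖∑ i ∈ Finset.range k, c i • b i‖
          ≤ max ((Ke*Cb + Λe) * (1 + Λe*Cb/‖diffSeq b 0‖)) 1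
              * ‖∑ i ∈ Finset.range n, c i • b i‖ := by
      intro c k n hkn
      rcases eq_or_lt_of_le hkn with heq | hlt
      · subst heq
        calc ‖∑ i ∈ Finset.range k, c i • b i‖
            = 1 * ‖∑ i ∈ Finset.range k, c i • b i‖ := (one_mul _).symm
          _ ≤ _ := mul_le_mul_of_nonneg_right (le_max_right _ _) (norm_nonneg _)
      have hΛe0 : (0:ℝ) ≤ Λe := by linarith
      set τ : ℕ → 𝕜 := fun i => ∑ j ∈ Finset.range i, c j with hτ
      have hSn0 : (0:ℝ) ≤ ‖∑ i ∈ Finset.range n, c i • b i‖ := norm_nonneg _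
      have hτn : ‖τ n‖ ≤ Λe * ‖∑ i ∈ Finset.range n, c i • b i‖ / ‖diffSeq b 0‖ := by
        rw [le_div_iff₀ he0]
        exact htau c n
      have h6 : ∀ m', ∑ i ∈ Finset.range m', τ i • diffSeq b i
          = τ m' • (∑ i ∈ Finset.range m', diffSeq b i)
            - ∑ i ∈ Finset.range m', c i • b i := by
        intro m'
        rw [hPS c m']
        abel
      have hPnb : ‖∑ i ∈ Finset.range n, τ i • diffSeq b i‖
          ≤ (1 + Λe*Cb/‖diffSeq b 0‖) * ‖∑ i ∈ Finset.range n, c i • b i‖ := by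
        rw [h6 n]
        calc ‖τ n • (∑ i ∈ Finset.range n, diffSeq b i)
              - ∑ i ∈ Finset.range n, c i • b i‖
            ≤ ‖τ n‖ * ‖∑ i ∈ Finset.range n, diffSeq b i‖
              + ‖∑ i ∈ Finset.range n, c i • b i‖ := by
              refine le_trans (norm_sub_le _ _) ?_
              rw [norm_smul]
          _ ≤ (Λe * ‖∑ i ∈ Finset.range n, c i • b i‖ / ‖diffSeq b 0‖) * Cb
              + ‖∑ i ∈ Finset.range n, c i • b i‖ := by
              have := mul_le_mul hτn (hBe n) (norm_nonneg _)
                (div_nonneg (mul_nonneg hΛe0 hSn0) he0.le)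
              linarith
          _ = (1 + Λe*Cb/‖diffSeq b 0‖) * ‖∑ i ∈ Finset.range n, c i • b i‖ := by
              field_simp
              ring
      have hτk : ‖τ k‖ ≤ Ke * ‖∑ i ∈ Finset.range n, τ i • diffSeq b i‖ := by
        have h7 := hKe τ k n (by
          rw [Finset.singleton_subset_iff, Finset.mem_range]; exact hlt)
        simpa using h7
      have hPk : ‖∑ i ∈ Finset.range k, τ i • diffSeq b i‖
          ≤ Λe * ‖∑ i ∈ Finset.range n, τ i • diffSeq b i‖ := hΛe τ k n hkn
      have step1 : ‖∑ i ∈ Finset.range k, c i • b i‖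
          ≤ (Ke*Cb + Λe) * ‖∑ i ∈ Finset.range n, τ i • diffSeq b i‖ := by
        have h8 : ∑ i ∈ Finset.range k, c i • b i
            = τ k • (∑ i ∈ Finset.range k, diffSeq b i)
              - ∑ i ∈ Finset.range k, τ i • diffSeq b i := by
          rw [hPS c k]
        have h9 : ‖∑ i ∈ Finset.range k, c i • b i‖
            ≤ ‖τ k‖ * ‖∑ i ∈ Finset.range k, diffSeq b i‖
              + ‖∑ i ∈ Finset.range k, τ i • diffSeq b i‖ := by
          rw [h8]
          refine le_trans (norm_sub_le _ _) ?_
          rw [norm_smul]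
        have h10 : ‖τ k‖ * ‖∑ i ∈ Finset.range k, diffSeq b i‖
            ≤ (Ke * ‖∑ i ∈ Finset.range n, τ i • diffSeq b i‖) * Cb :=
          mul_le_mul hτk (hBe k) (norm_nonneg _) (mul_nonneg hKe0 (norm_nonneg _))
        nlinarith
      have step2 : (Ke*Cb + Λe) * ‖∑ i ∈ Finset.range n, τ i • diffSeq b i‖
          ≤ (Ke*Cb + Λe) * ((1 + Λe*Cb/‖diffSeq b 0‖)
              * ‖∑ i ∈ Finset.range n, c i • b i‖) := by
        refine mul_le_mul_of_nonneg_left hPnb ?_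
        have := mul_nonneg hKe0 hCb0
        linarith
      calc ‖∑ i ∈ Finset.range k, c i • b i‖
          ≤ (Ke*Cb + Λe) * ((1 + Λe*Cb/‖diffSeq b 0‖)
              * ‖∑ i ∈ Finset.range n, c i • b i‖) := le_trans step1 step2
        _ = ((Ke*Cb + Λe) * (1 + Λe*Cb/‖diffSeq b 0‖))
              * ‖∑ i ∈ Finset.range n, c i • b i‖ := by ring
        _ ≤ _ := mul_le_mul_of_nonneg_right (le_max_left _ _) hSn0
    refine ⟨?_, ⟨hbne, _, hΛb⟩, ?_⟩
    · intro f
      obtain ⟨l, hl⟩ := hwce f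
      exact ⟨l, by simpa only [diffSeq_sum] using hl⟩
    · rintro c ⟨M, hM⟩
      have hΛe0 : (0:ℝ) ≤ Λe := by linarith
      have hM0 : (0:ℝ) ≤ M := by simpa using hM 0
      have hτn : ∀ n, ‖∑ j ∈ Finset.range n, c j‖ ≤ Λe * M / ‖diffSeq b 0‖ := by
        intro n
        rw [le_div_iff₀ he0]
        refine le_trans (htau c n) ?_
        exact mul_le_mul_of_nonneg_left (hM n) hΛe0
      have hPb : ∀ n, ‖∑ j ∈ Finset.range n,
            (∑ i ∈ Finset.range j, c i) • diffSeq b j‖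
          ≤ M + (Λe*M/‖diffSeq b 0‖) * Cb := by
        intro n
        have h6 : ∑ j ∈ Finset.range n, (∑ i ∈ Finset.range j, c i) • diffSeq b j
            = (∑ j ∈ Finset.range n, c j) • (∑ i ∈ Finset.range n, diffSeq b i)
              - ∑ i ∈ Finset.range n, c i • b i := by
          rw [hPS c n]
          abel
        rw [h6]
        calc ‖(∑ j ∈ Finset.range n, c j) • (∑ i ∈ Finset.range n, diffSeq b i)
              - ∑ i ∈ Finset.range n, c i • b i‖
            ≤ ‖∑ j ∈ Finset.range n, c j‖ * ‖∑ i ∈ Finset.range n, diffSeq b i‖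
              + ‖∑ i ∈ Finset.range n, c i • b i‖ := by
              refine le_trans (norm_sub_le _ _) ?_
              rw [norm_smul]
          _ ≤ (Λe*M/‖diffSeq b 0‖) * Cb + M := by
              have h10 := mul_le_mul (hτn n) (hBe n) (norm_nonneg _)
                (div_nonneg (mul_nonneg hΛe0 hM0) he0.le)
              have := hM n
              linarith
          _ = M + (Λe*M/‖diffSeq b 0‖) * Cb := by ring
      obtain ⟨l, hl⟩ := hconv (fun j => ∑ i ∈ Finset.range j, c i)
        ⟨M + (Λe*M/‖diffSeq b 0‖) * Cb, hPb⟩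
      exact ⟨l, hl⟩
end

section
/- Every convex block basis of a strongly summing sequence is strongly summing. -/
open Filter Topology

private def auxD {𝕜 : Type*} [RCLike 𝕜] (n : ℕ → ℕ) (c : ℕ → ℝ) (a : ℕ → 𝕜) (i : ℕ) : 𝕜 :=
  ∑ j ∈ Finset.range i, if i ∈ Finset.Ioc (n j) (n (j + 1)) then a j * (c i : 𝕜) else 0

private lemma aux_blockSum {𝕜 : Type*} [RCLike 𝕜] {M : Type*} [AddCommGroup M] [Module 𝕜 M]
    (n : ℕ → ℕ) (hn : StrictMono n) (c : ℕ → ℝ) (a : ℕ → 𝕜) (v : ℕ → M) :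
    ∀ k, ∑ i ∈ Finset.range (n k + 1), auxD n c a i • v i
      = ∑ j ∈ Finset.range k, a j • ∑ i ∈ Finset.Ioc (n j) (n (j + 1)), (c i : 𝕜) • v i := by
  have hsplit : ∀ (k : ℕ) (f : ℕ → M), ∑ i ∈ Finset.range (n (k + 1) + 1), f i =
      ∑ i ∈ Finset.range (n k + 1), f i + ∑ i ∈ Finset.Ioc (n k) (n (k + 1)), f i := by
    intro k f
    rw [Finset.range_eq_Ico, Finset.range_eq_Ico, ← Finset.Ico_add_one_add_one_eq_Ioc,
      Finset.sum_Ico_consecutive _ (Nat.zero_le _)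
        (by have : n k < n (k + 1) := hn (Nat.lt_succ_self k); omega : n k + 1 ≤ n (k + 1) + 1)]
  intro k
  induction k with
  | zero =>
    rw [Finset.range_zero, Finset.sum_empty, Finset.sum_eq_zero]
    intro i hi
    rw [auxD, Finset.sum_eq_zero, zero_smul]
    intro j _
    rw [if_neg]
    simp only [Finset.mem_Ioc, not_and_or, not_lt]
    exact Or.inl (le_trans (Nat.lt_succ_iff.mp (Finset.mem_range.mp hi))
      (hn.monotone (Nat.zero_le j)))
  | succ k ih =>
    rw [hsplit k, ih, Finset.sum_range_succ]
    congr 1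
    rw [Finset.smul_sum]
    refine Finset.sum_congr rfl fun i hi => ?_
    rw [smul_smul]
    congr 1
    rw [auxD, Finset.sum_eq_single_of_mem k
      (Finset.mem_range.mpr (lt_of_le_of_lt hn.le_apply (Finset.mem_Ioc.mp hi).1))
      ?_, if_pos hi]
    intro j _ hjk
    obtain ⟨h1, h2⟩ := Finset.mem_Ioc.mp hi
    rw [if_neg]
    simp only [Finset.mem_Ioc, not_and_or, not_lt, not_le]
    rcases lt_or_gt_of_ne hjk with h | h
    · exact Or.inr (lt_of_le_of_lt (hn.monotone h) h1)
    · exact Or.inl (le_trans h2 (hn.monotone h))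

/-- Every convex block basis of a strongly summing sequence is strongly summing. -/
theorem convexBlockBasis_stronglySumming {𝕜 : Type*} [RCLike 𝕜] {B : Type*}
    [NormedAddCommGroup B] [NormedSpace 𝕜 B] [CompleteSpace B] (b u : ℕ → B)
    (hss : StronglySumming 𝕜 b) (hcb : ConvexBlockBasis 𝕜 b u) :
    StronglySumming 𝕜 u := by
  obtain ⟨hwc, ⟨hbne, Λ, hΛ⟩, hsum⟩ := hss
  obtain ⟨n, c, hn, hc0, hc1, hu⟩ := hcb
  -- Λ ≥ 1
  have hΛ1 : (1 : ℝ) ≤ Λ := by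
    have h := hΛ (fun _ => (1 : 𝕜)) 1 1 le_rfl
    simp only [Finset.sum_range_one, one_smul] at h
    have hb0 : (0 : ℝ) < ‖b 0‖ := norm_pos_iff.mpr (hbne 0)
    nlinarith
  have hΛ0 : (0 : ℝ) ≤ Λ := le_trans zero_le_one hΛ1
  -- cast of convexity condition
  have hcast : ∀ j, ∑ i ∈ Finset.Ioc (n j) (n (j + 1)), ((c i : ℝ) : 𝕜) = 1 := by
    intro j
    rw [← RCLike.ofReal_sum, hc1 j, RCLike.ofReal_one]
  -- u j ≠ 0
  have hune : ∀ j, u j ≠ 0 := by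
    intro j huj
    set e : ℕ → 𝕜 := fun i => if i ∈ Finset.Ioc (n j) (n (j + 1)) then (c i : 𝕜) else 0 with he
    have hsub : Finset.Ioc (n j) (n (j + 1)) ⊆ Finset.range (n (j + 1) + 1) := by
      intro i hi
      simp only [Finset.mem_Ioc] at hi
      simp only [Finset.mem_range]
      omega
    have htot : ∑ i ∈ Finset.range (n (j + 1) + 1), e i • b i = 0 := by
      have h1 : ∀ i ∈ Finset.range (n (j + 1) + 1), i ∉ Finset.Ioc (n j) (n (j + 1)) →
          e i • b i = 0 := by
        intro i _ hi
        have h2 : e i = 0 := if_neg hi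
        rw [h2, zero_smul]
      rw [← Finset.sum_subset hsub h1, ← huj, hu j]
      refine Finset.sum_congr rfl fun i hi => ?_
      have h2 : e i = (c i : 𝕜) := if_pos hi
      rw [h2]
    have hP : ∀ k, k ≤ n (j + 1) + 1 → ∑ i ∈ Finset.range k, e i • b i = 0 := by
      intro k hk
      have h := hΛ e k (n (j + 1) + 1) hk
      rw [htot] at h
      simp only [norm_zero, mul_zero] at h
      exact norm_le_zero_iff.mp h
    have hz : ∀ i ∈ Finset.Ioc (n j) (n (j + 1)), c i = 0 := by
      intro i hi
      have hi' : i + 1 ≤ n (j + 1) + 1 := by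
        have := (Finset.mem_Ioc.mp hi).2; omega
      have h1 := hP (i + 1) hi'
      have h2 := hP i (by omega)
      rw [Finset.sum_range_succ, h2, zero_add] at h1
      have h3 : e i = (c i : 𝕜) := if_pos hi
      rw [h3] at h1
      rcases smul_eq_zero.mp h1 with h | h
      · exact_mod_cast h
      · exact absurd h (hbne i)
    have h4 := hc1 j
    rw [Finset.sum_eq_zero hz] at h4
    norm_num at h4
  have key : ∀ (a : ℕ → 𝕜) (k : ℕ),
      ∑ i ∈ Finset.range (n k + 1), auxD n c a i • b i = ∑ j ∈ Finset.range k, a j • u j := by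
    intro a k
    rw [aux_blockSum n hn c a b k]
    exact Finset.sum_congr rfl fun j _ => by rw [hu j]
  have keyS : ∀ (a : ℕ → 𝕜) (k : ℕ),
      ∑ i ∈ Finset.range (n k + 1), auxD n c a i = ∑ j ∈ Finset.range k, a j := by
    intro a k
    have h := aux_blockSum n hn c a (fun _ => (1 : 𝕜)) k
    simp only [smul_eq_mul, mul_one] at h
    rw [h]
    exact Finset.sum_congr rfl fun j _ => by rw [hcast j, mul_one]
  refine ⟨?_, ⟨hune, Λ, ?_⟩, ?_⟩
  · -- weak Cauchy
    intro f
    obtain ⟨l, hl⟩ := hwc f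
    refine ⟨l, ?_⟩
    rw [Metric.tendsto_atTop] at hl ⊢
    intro ε hε
    obtain ⟨N, hN⟩ := hl (ε / 2) (by positivity)
    refine ⟨N, fun j hj => ?_⟩
    have hfu : f (u j) = ∑ i ∈ Finset.Ioc (n j) (n (j + 1)), ((c i : ℝ) : 𝕜) • f (b i) := by
      rw [hu j, map_sum]
      exact Finset.sum_congr rfl fun i _ => by rw [map_smul]
    have hkey : ∑ i ∈ Finset.Ioc (n j) (n (j + 1)), ((c i : ℝ) : 𝕜) • (f (b i) - l)
        = f (u j) - l := by
      rw [hfu]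
      simp only [smul_sub, Finset.sum_sub_distrib, ← Finset.sum_smul, hcast j, one_smul]
    rw [dist_eq_norm, ← hkey]
    calc ‖∑ i ∈ Finset.Ioc (n j) (n (j + 1)), ((c i : ℝ) : 𝕜) • (f (b i) - l)‖
        ≤ ∑ i ∈ Finset.Ioc (n j) (n (j + 1)), ‖((c i : ℝ) : 𝕜) • (f (b i) - l)‖ :=
          norm_sum_le _ _
      _ ≤ ∑ i ∈ Finset.Ioc (n j) (n (j + 1)), c i * (ε / 2) := by
          refine Finset.sum_le_sum fun i hi => ?_
          rw [norm_smul, RCLike.norm_ofReal, abs_of_nonneg (hc0 i)]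
          refine mul_le_mul_of_nonneg_left ?_ (hc0 i)
          have hiN : N ≤ i := by
            have h1 : n j < i := (Finset.mem_Ioc.mp hi).1
            have h2 : j ≤ n j := hn.le_apply
            omega
          have h5 := hN i hiN
          rw [dist_eq_norm] at h5
          exact h5.le
      _ = ε / 2 := by rw [← Finset.sum_mul, hc1 j, one_mul]
      _ < ε := by linarith
  · -- basic
    intro a k m hkm
    have h := hΛ (auxD n c a) (n k + 1) (n m + 1) (Nat.succ_le_succ (hn.monotone hkm))
    rwa [key a k, key a m] at h
  · -- strongly summing
    rintro a ⟨M, hM⟩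
    have hbound : ∀ N, ‖∑ i ∈ Finset.range N, auxD n c a i • b i‖ ≤ Λ * M := by
      intro N
      have h1 := hΛ (auxD n c a) N (n N + 1) (Nat.le_succ_of_le hn.le_apply)
      rw [key a N] at h1
      exact h1.trans (mul_le_mul_of_nonneg_left (hM N) hΛ0)
    obtain ⟨l, hl⟩ := hsum (auxD n c a) ⟨Λ * M, hbound⟩
    refine ⟨l, ?_⟩
    have h2 : Tendsto (fun k => n k + 1) atTop atTop :=
      (tendsto_add_atTop_nat 1).comp hn.tendsto_atTop
    have h3 := hl.comp h2
    exact Filter.Tendsto.congr (fun k => keyS a k) h3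
end

section
/- A basic sequence (b_j) in a Banach space is strongly summing if and only if its sequence of biorthogonal functionals (b_j^*) in [b_j]^* is coefficient converging. -/
open Filter Topology

section AuxSS

open Filter Topology

private theorem auxSS_clusterPt_const {α : Type*} [TopologicalSpace α] [T2Space α]
    {u : ℕ → α} {l c : α} (h : MapClusterPt l atTop u)
    (hc : ∀ᶠ n in atTop, u n = c) : l = c := by
  have ht : Tendsto u atTop (𝓝 c) :=
    Tendsto.congr' (hc.mono fun n h => h.symm) tendsto_const_nhds
  exact eq_of_nhds_neBot (h.clusterPt.mono ht)

end AuxSS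

set_option maxHeartbeats 2000000 in
/-- A basic sequence (b_j) spanning the Banach space X = [b_j] is strongly summing iff
its sequence of biorthogonal functionals (b_j^*) in X^* is coefficient converging. -/
theorem stronglySumming_iff_biorthogonal_coeffConverging {𝕜 : Type*} [RCLike 𝕜]
    {X : Type*} [NormedAddCommGroup X] [NormedSpace 𝕜 X] [CompleteSpace X] (b : ℕ → X)
    (hb : IsBasicSeq 𝕜 b)
    (hdense : Dense (Submodule.span 𝕜 (Set.range b) : Set X))
    (bstar : ℕ → X →L[𝕜] 𝕜)
    (hbi : ∀ i j, bstar j (b i) = if i = j then 1 else 0) :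
    StronglySumming 𝕜 b ↔ CoeffConverging 𝕜 bstar := by
  classical
  obtain ⟨hbne, Λ, hΛ⟩ := hb
  have hb0 : 0 < ‖b 0‖ := norm_pos_iff.mpr (hbne 0)
  have hΛ1 : 1 ≤ Λ := by
    have h := hΛ (fun _ => (1 : 𝕜)) 1 1 le_rfl
    simp only [Finset.sum_range_one, one_smul] at h
    nlinarith
  have hΛ0 : (0 : ℝ) ≤ Λ := zero_le_one.trans hΛ1
  -- biorthogonality against finite sums
  have hbs : ∀ (a : ℕ → 𝕜) (m j : ℕ),
      bstar j (∑ i ∈ Finset.range m, a i • b i) = if j < m then a j else 0 := by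
    intro a m j
    rw [map_sum]
    have h1 : ∀ i ∈ Finset.range m, bstar j (a i • b i) = if i = j then a i else 0 := by
      intro i _
      rw [map_smul, hbi, smul_eq_mul]
      split <;> simp
    rw [Finset.sum_congr rfl h1, Finset.sum_ite_eq' (Finset.range m) j a]
    simp [Finset.mem_range]
  -- the basis projections
  set P : ℕ → X →L[𝕜] X := fun k => ∑ i ∈ Finset.range k, (bstar i).smulRight (b i) with hPdef
  have hPapp : ∀ (k : ℕ) (x : X), P k x = ∑ i ∈ Finset.range k, bstar i x • b i := by
    intro k x
    simp [hPdef, ContinuousLinearMap.sum_apply]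
  have hbsP : ∀ (k j : ℕ) (x : X), bstar j (P k x) = if j < k then bstar j x else 0 := by
    intro k j x
    rw [hPapp]
    exact hbs (fun i => bstar i x) k j
  -- representation of elements of the span
  have hrep : ∀ x ∈ Submodule.span 𝕜 (Set.range b), ∃ a : ℕ → 𝕜, ∃ N : ℕ,
      (∀ m, N ≤ m → x = ∑ i ∈ Finset.range m, a i • b i) ∧ ∀ j, bstar j x = a j := by
    intro x hx
    obtain ⟨a, ha⟩ := Finsupp.mem_span_range_iff_exists_finsupp.mp hx
    have key : ∀ m, a.support.sup id + 1 ≤ m → x = ∑ i ∈ Finset.range m, a i • b i := by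
      intro m hm
      rw [← ha, Finsupp.sum]
      apply Finset.sum_subset
      · intro i hi
        rw [Finset.mem_range]
        have h3 : i ≤ a.support.sup id := Finset.le_sup (f := id) hi
        omega
      · intro i _ hi
        rw [Finsupp.notMem_support_iff.mp hi, zero_smul]
    refine ⟨a, a.support.sup id + 1, key, fun j => ?_⟩
    rw [key (max (a.support.sup id + 1) (j + 1)) (le_max_left _ _), hbs,
      if_pos (lt_of_lt_of_le (Nat.lt_succ_self j) (le_max_right _ _))]
  -- norm bound for the projections on the span, then everywhere by density
  have hPspan : ∀ k, ∀ x ∈ Submodule.span 𝕜 (Set.range b), ‖P k x‖ ≤ Λ * ‖x‖ := by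
    intro k x hx
    obtain ⟨a, N, key, hcoef⟩ := hrep x hx
    have h1 : P k x = ∑ i ∈ Finset.range k, a i • b i := by
      rw [hPapp]
      exact Finset.sum_congr rfl fun i _ => by rw [hcoef]
    rw [h1, key (max N k) (le_max_left _ _)]
    exact hΛ a k (max N k) (le_max_right _ _)
  have hP : ∀ (k : ℕ) (x : X), ‖P k x‖ ≤ Λ * ‖x‖ := by
    intro k x
    have hclosed : IsClosed {y : X | ‖P k y‖ ≤ Λ * ‖y‖} :=
      isClosed_le ((P k).continuous.norm) (continuous_const.mul continuous_norm)
    exact closure_minimal (hPspan k) hclosed (hdense x)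
  have hPnorm : ∀ k, ‖P k‖ ≤ Λ := fun k => ContinuousLinearMap.opNorm_le_bound _ hΛ0 (hP k)
  -- the adjoint identity
  have hadj : ∀ (f : X →L[𝕜] 𝕜) (n : ℕ),
      (∑ i ∈ Finset.range n, f (b i) • bstar i) = f.comp (P n) := by
    intro f n
    ext x
    rw [ContinuousLinearMap.comp_apply, hPapp, map_sum, ContinuousLinearMap.sum_apply]
    refine Finset.sum_congr rfl fun i _ => ?_
    rw [ContinuousLinearMap.smul_apply, map_smul, smul_eq_mul, smul_eq_mul, mul_comm]
  have hadjnorm : ∀ (f : X →L[𝕜] 𝕜) (n : ℕ),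
      ‖∑ i ∈ Finset.range n, f (b i) • bstar i‖ ≤ Λ * ‖f‖ := by
    intro f n
    rw [hadj]
    calc ‖f.comp (P n)‖ ≤ ‖f‖ * ‖P n‖ := ContinuousLinearMap.opNorm_comp_le _ _
      _ ≤ ‖f‖ * Λ := mul_le_mul_of_nonneg_left (hPnorm n) (norm_nonneg f)
      _ = Λ * ‖f‖ := mul_comm _ _
  -- (bstar) is a basic sequence
  have hstar_ne : ∀ j, bstar j ≠ 0 := by
    intro j h
    have h2 := hbi j j
    rw [h] at h2
    simp at h2
  have hstar_basic : ∀ (c : ℕ → 𝕜) (k n : ℕ), k ≤ n →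
      ‖∑ i ∈ Finset.range k, c i • bstar i‖ ≤ Λ * ‖∑ i ∈ Finset.range n, c i • bstar i‖ := by
    intro c k n hkn
    have hcomp : (∑ i ∈ Finset.range k, c i • bstar i)
        = (∑ i ∈ Finset.range n, c i • bstar i).comp (P k) := by
      ext x
      rw [ContinuousLinearMap.comp_apply, ContinuousLinearMap.sum_apply,
        ContinuousLinearMap.sum_apply]
      have h1 : ∀ i ∈ Finset.range n, (c i • bstar i) (P k x)
          = if i ∈ Finset.range k then (c i • bstar i) x else 0 := by
        intro i _
        rw [ContinuousLinearMap.smul_apply, hbsP]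
        by_cases h : i < k <;> simp [Finset.mem_range, h]
      rw [Finset.sum_congr rfl h1, Finset.sum_ite_mem,
        Finset.inter_eq_right.mpr (Finset.range_subset_range.mpr hkn)]
    rw [hcomp]
    calc ‖(∑ i ∈ Finset.range n, c i • bstar i).comp (P k)‖
        ≤ ‖∑ i ∈ Finset.range n, c i • bstar i‖ * ‖P k‖ :=
          ContinuousLinearMap.opNorm_comp_le _ _
      _ ≤ ‖∑ i ∈ Finset.range n, c i • bstar i‖ * Λ :=
          mul_le_mul_of_nonneg_left (hPnorm k) (norm_nonneg _)
      _ = Λ * ‖∑ i ∈ Finset.range n, c i • bstar i‖ := mul_comm _ _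
  -- double dual bound
  have hdd : ∀ (F : (X →L[𝕜] 𝕜) →L[𝕜] 𝕜) (n : ℕ),
      ‖∑ i ∈ Finset.range n, F (bstar i) • b i‖ ≤ Λ * ‖F‖ := by
    intro F n
    apply NormedSpace.norm_le_dual_bound 𝕜 _ (mul_nonneg hΛ0 (norm_nonneg F))
    intro f
    have h1 : f (∑ i ∈ Finset.range n, F (bstar i) • b i)
        = F (∑ i ∈ Finset.range n, f (b i) • bstar i) := by
      rw [map_sum, map_sum]
      refine Finset.sum_congr rfl fun i _ => ?_
      rw [map_smul, map_smul, smul_eq_mul, smul_eq_mul, mul_comm]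
    rw [h1]
    calc ‖F (∑ i ∈ Finset.range n, f (b i) • bstar i)‖
        ≤ ‖F‖ * ‖∑ i ∈ Finset.range n, f (b i) • bstar i‖ := F.le_opNorm _
      _ ≤ ‖F‖ * (Λ * ‖f‖) := mul_le_mul_of_nonneg_left (hadjnorm f n) (norm_nonneg F)
      _ = Λ * ‖F‖ * ‖f‖ := by ring
  constructor
  · rintro ⟨hwc, -, hsum⟩
    refine ⟨⟨hstar_ne, Λ, hstar_basic⟩, ?_, ?_⟩
    · intro F
      obtain ⟨l, hl⟩ := hsum (fun j => F (bstar j)) ⟨Λ * ‖F‖, fun n => hdd F n⟩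
      refine ⟨l, ?_⟩
      have h2 := hl.comp (tendsto_add_atTop_nat 1)
      simp only [Function.comp_def] at h2
      simpa only [map_sum] using h2
    · rintro c ⟨M, hM⟩
      set g : ℕ → WeakDual 𝕜 X := fun n =>
        StrongDual.toWeakDual (∑ j ∈ Finset.range n, c j • bstar j) with hg
      have hmem : ∀ n, g n ∈ WeakDual.toStrongDual ⁻¹' Metric.closedBall 0 M := by
        intro n
        simp only [Set.mem_preimage, Metric.mem_closedBall, dist_zero_right]
        exact hM n
      have hco : Filter.map g atTop ≤
          Filter.principal (WeakDual.toStrongDual ⁻¹' Metric.closedBall 0 M) :=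
        Filter.le_principal_iff.mpr (Filter.mem_map.mpr (Filter.Eventually.of_forall hmem))
      obtain ⟨gl, -, hcl⟩ :=
        (WeakDual.isCompact_closedBall (0 : StrongDual 𝕜 X) M).exists_mapClusterPt hco
      have hglb : ∀ j, gl (b j) = c j := by
        intro j
        have h1 : MapClusterPt (gl (b j)) atTop ((fun φ : WeakDual 𝕜 X => φ (b j)) ∘ g) :=
          hcl.continuousAt_comp (WeakDual.eval_continuous (b j)).continuousAt
        refine auxSS_clusterPt_const h1 (eventually_atTop.mpr ⟨j + 1, fun n hn => ?_⟩)
        show (∑ i ∈ Finset.range n, c i • bstar i) (b j) = c j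
        rw [ContinuousLinearMap.sum_apply]
        have h2 : ∀ i ∈ Finset.range n, (c i • bstar i) (b j) = if i = j then c i else 0 := by
          intro i _
          rw [ContinuousLinearMap.smul_apply, hbi, smul_eq_mul, mul_ite, mul_one, mul_zero]
          exact if_congr eq_comm rfl rfl
        rw [Finset.sum_congr rfl h2, Finset.sum_ite_eq' (Finset.range n) j c,
          if_pos (Finset.mem_range.mpr (Nat.lt_of_succ_le hn))]
      obtain ⟨l, hl⟩ := hwc (WeakDual.toStrongDual gl)
      refine ⟨l, ?_⟩
      have h3 : (fun n => (WeakDual.toStrongDual gl) (b n)) = c := funext fun j => hglb j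
      rwa [h3] at hl
  · rintro ⟨-, hwcS, hcc⟩
    refine ⟨?_, ⟨hbne, Λ, hΛ⟩, ?_⟩
    · intro f
      exact hcc (fun j => f (b j)) ⟨Λ * ‖f‖, fun n => hadjnorm f n⟩
    · rintro c ⟨M, hM⟩
      set ι := NormedSpace.inclusionInDoubleDualLi (E := X) 𝕜 with hι
      set g : ℕ → WeakDual 𝕜 (X →L[𝕜] 𝕜) := fun n =>
        StrongDual.toWeakDual (ι (∑ j ∈ Finset.range n, c j • b j)) with hg
      have hmem : ∀ n, g n ∈ WeakDual.toStrongDual ⁻¹' Metric.closedBall 0 M := by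
        intro n
        simp only [Set.mem_preimage, Metric.mem_closedBall, dist_zero_right]
        have hn := hM n
        rw [← ι.norm_map] at hn
        convert hn using 1
        exact dist_zero_right (ι (∑ j ∈ Finset.range n, c j • b j))
      have hco : Filter.map g atTop ≤
          Filter.principal (WeakDual.toStrongDual ⁻¹' Metric.closedBall 0 M) :=
        Filter.le_principal_iff.mpr (Filter.mem_map.mpr (Filter.Eventually.of_forall hmem))
      obtain ⟨F, -, hcl⟩ :=
        (WeakDual.isCompact_closedBall (0 : StrongDual 𝕜 (X →L[𝕜] 𝕜)) M).exists_mapClusterPt hco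
      have hFb : ∀ j, F (bstar j) = c j := by
        intro j
        have h1 : MapClusterPt (F (bstar j)) atTop
            ((fun φ : WeakDual 𝕜 (X →L[𝕜] 𝕜) => φ (bstar j)) ∘ g) :=
          hcl.continuousAt_comp (WeakDual.eval_continuous (bstar j)).continuousAt
        refine auxSS_clusterPt_const h1 (eventually_atTop.mpr ⟨j + 1, fun n hn => ?_⟩)
        show ι (∑ i ∈ Finset.range n, c i • b i) (bstar j) = c j
        have h2 : ι (∑ i ∈ Finset.range n, c i • b i) (bstar j)
            = bstar j (∑ i ∈ Finset.range n, c i • b i) := rfl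
        rw [h2, hbs, if_pos (Nat.lt_of_succ_le hn)]
      obtain ⟨l, hl⟩ := hwcS (WeakDual.toStrongDual F)
      have he : (fun n => (WeakDual.toStrongDual F) (∑ j ∈ Finset.range (n + 1), bstar j))
          = fun n => ∑ j ∈ Finset.range (n + 1), c j := by
        funext n
        rw [show (WeakDual.toStrongDual F) (∑ j ∈ Finset.range (n + 1), bstar j)
            = F (∑ j ∈ Finset.range (n + 1), bstar j) from rfl, map_sum]
        exact Finset.sum_congr rfl fun j _ => hFb j
      rw [he] at hl
      exact ⟨l, (tendsto_add_atTop_iff_nat 1).mp hl⟩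
end

section
/- If (e_j) is a coefficient converging sequence in a Banach space, then the sequence of partial sums (Σ_{j=1}^n e_j)_{n≥1} is a non-trivial weak-Cauchy sequence, i.e., it is weak-Cauchy but not weakly convergent. -/
open Filter Topology

section AuxLemmas
variable {𝕜 : Type*} [RCLike 𝕜] {B : Type*} [NormedAddCommGroup B] [NormedSpace 𝕜 B]

/-- Mazur-type approximation: if the partial sums converge weakly to `b`, then for every `N` and
`ε ` there is a finitely supported real coefficient sequence `c` with `c j = 1` for `j ≤ N`,
`c j = 0` for `j ≥ M`, whose combination is `ε`-close to `b`. -/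
lemma aux_approx (e : ℕ → B) (b : B)
    (hb : ∀ f : B →L[𝕜] 𝕜,
      Tendsto (fun n => f (∑ j ∈ Finset.range (n + 1), e j)) atTop (𝓝 (f b)))
    (N : ℕ) (ε : ℝ) (hε : 0 < ε) :
    ∃ (c : ℕ → ℝ) (M : ℕ), N < M ∧ (∀ j ≤ N, c j = 1) ∧ (∀ j, M ≤ j → c j = 0) ∧
      ‖(∑ j ∈ Finset.range M, ((c j : 𝕜)) • e j) - b‖ < ε := by
  classical
  letI : NormedSpace ℝ B := NormedSpace.restrictScalars ℝ 𝕜 B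
  letI : IsScalarTower ℝ 𝕜 B := RestrictScalars.isScalarTower _ _ _
  set x : ℕ → B := fun n => ∑ j ∈ Finset.range (n + 1), e j with hx
  -- Step 1: b is in the closure of the convex hull of the tail {x n : n ≥ N}
  have hcl : b ∈ closure (convexHull ℝ (x '' Set.Ici N)) := by
    by_contra h
    obtain ⟨f, u, hfu, hub⟩ :=
      RCLike.geometric_hahn_banach_closed_point (𝕜 := 𝕜)
        ((convex_convexHull ℝ _).closure) isClosed_closure h
    have h1 : Tendsto (fun n => RCLike.re (f (x n))) atTop (𝓝 (RCLike.re (f b))) :=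
      (RCLike.continuous_re.tendsto _).comp (hb f)
    have h2 : RCLike.re (f b) ≤ u :=
      le_of_tendsto h1 (Filter.eventually_atTop.2 ⟨N, fun n hn =>
        (hfu _ (subset_closure (subset_convexHull ℝ _ ⟨n, hn, rfl⟩))).le⟩)
    linarith
  rw [Metric.mem_closure_iff] at hcl
  obtain ⟨v, hv, hdist⟩ := hcl ε hε
  rw [convexHull_eq] at hv
  obtain ⟨ι, t, w, z, hw0, hw1, hz, hvc⟩ := hv
  have htne : t.Nonempty := by
    rcases Finset.eq_empty_or_nonempty t with h | h
    · exfalso; rw [h, Finset.sum_empty] at hw1; norm_num at hw1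
    · exact h
  set n : ι → ℕ := fun i => if h : i ∈ t then (hz i h).choose else N with hn
  have hnN : ∀ i ∈ t, N ≤ n i := by
    intro i hi
    simp only [hn, dif_pos hi]
    exact (hz i hi).choose_spec.1
  have hnz : ∀ i ∈ t, x (n i) = z i := by
    intro i hi
    simp only [hn, dif_pos hi]
    exact (hz i hi).choose_spec.2
  set M : ℕ := t.sup n + 1 with hM
  have hniM : ∀ i ∈ t, n i < M := fun i hi => Nat.lt_succ_of_le (Finset.le_sup hi)
  set c : ℕ → ℝ := fun j => ∑ i ∈ t.filter (fun i => j ≤ n i), w i with hc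
  refine ⟨c, M, ?_, ?_, ?_, ?_⟩
  · obtain ⟨i, hi⟩ := htne
    exact lt_of_le_of_lt (hnN i hi) (hniM i hi)
  · intro j hj
    have : t.filter (fun i => j ≤ n i) = t := by
      apply Finset.filter_true_of_mem
      intro i hi; exact hj.trans (hnN i hi)
    rw [hc]; simp only [this]; exact hw1
  · intro j hj
    have : t.filter (fun i => j ≤ n i) = ∅ := by
      apply Finset.filter_false_of_mem
      intro i hi
      have := hniM i hi
      omega
    rw [hc]; simp only [this, Finset.sum_empty]
  · -- the combination equals v
    have hkey : (∑ j ∈ Finset.range M, ((c j : 𝕜)) • e j) = v := by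
      have h1 : ∀ j, ((c j : 𝕜)) • e j
          = ∑ i ∈ t, (if j ≤ n i then (w i : 𝕜) • e j else 0) := by
        intro j
        rw [hc]
        push_cast
        rw [Finset.sum_smul, Finset.sum_filter]
      calc (∑ j ∈ Finset.range M, ((c j : 𝕜)) • e j)
          = ∑ j ∈ Finset.range M, ∑ i ∈ t, (if j ≤ n i then (w i : 𝕜) • e j else 0) :=
            Finset.sum_congr rfl fun j _ => h1 j
        _ = ∑ i ∈ t, ∑ j ∈ Finset.range M, (if j ≤ n i then (w i : 𝕜) • e j else 0) :=
            Finset.sum_comm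
        _ = ∑ i ∈ t, (w i : 𝕜) • x (n i) := by
            apply Finset.sum_congr rfl
            intro i hi
            rw [Finset.sum_ite, Finset.sum_const_zero, add_zero]
            have hfe : (Finset.range M).filter (fun j => j ≤ n i) = Finset.range (n i + 1) := by
              ext j
              simp only [Finset.mem_filter, Finset.mem_range]
              have := hniM i hi
              omega
            rw [hfe, hx, Finset.smul_sum]
        _ = ∑ i ∈ t, w i • z i := by
            apply Finset.sum_congr rfl
            intro i hi
            rw [← hnz i hi, RCLike.real_smul_eq_coe_smul (K := 𝕜)]
        _ = v := by
            rw [← hvc, Finset.centerMass_eq_of_sum_1 _ _ hw1]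
    rw [hkey, ← dist_eq_norm, dist_comm]
    exact hdist

end AuxLemmas

/-- If (e_j) is coefficient converging, the partial sums form a non-trivial
weak-Cauchy sequence: weak-Cauchy but not weakly convergent. -/
theorem coeffConverging_partial_sums_nontrivial_weakCauchy {𝕜 : Type*} [RCLike 𝕜]
    {B : Type*} [NormedAddCommGroup B] [NormedSpace 𝕜 B] [CompleteSpace B] (e : ℕ → B)
    (hcc : CoeffConverging 𝕜 e) :
    WeakCauchy 𝕜 (fun n => ∑ j ∈ Finset.range (n + 1), e j) ∧
    ¬ WeaklyConvergent 𝕜 (fun n => ∑ j ∈ Finset.range (n + 1), e j) := by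
  classical
  obtain ⟨⟨hne, Λ, hΛ⟩, hwc, hcoef⟩ := hcc
  refine ⟨hwc, ?_⟩
  rintro ⟨b, hb⟩
  -- the basis constant is at least 1
  have hΛ1 : (1 : ℝ) ≤ Λ := by
    have h := hΛ (fun _ => (1 : 𝕜)) 1 1 le_rfl
    simp only [Finset.sum_range_one, one_smul] at h
    exact (le_mul_iff_one_le_left (norm_pos_iff.2 (hne 0))).1 h
  have hΛ0 : (0 : ℝ) ≤ Λ := le_trans zero_le_one hΛ1
  -- recursive construction of the convex blocks
  have happrox : ∀ (N k : ℕ), ∃ (c : ℕ → ℝ) (M : ℕ), N < M ∧ (∀ j ≤ N, c j = 1) ∧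
      (∀ j, M ≤ j → c j = 0) ∧
      ‖(∑ j ∈ Finset.range M, ((c j : 𝕜)) • e j) - b‖ < (1/2 : ℝ)^k :=
    fun N k => aux_approx e b hb N _ (by positivity)
  choose c M hNM h1 h0 hclose using happrox
  set N : ℕ → ℕ := fun k => Nat.rec 0 (fun k ih => M ih k) k with hNdef
  have hNsucc : ∀ k, N (k + 1) = M (N k) k := fun k => rfl
  set d : ℕ → ℕ → ℝ := fun k => c (N k) k with hddef
  have hNlt : ∀ k, N k < N (k + 1) := fun k => hNM (N k) k
  have hNmono : StrictMono N := strictMono_nat_of_lt_succ hNlt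
  have hNk : ∀ k, k ≤ N k := fun k => by
    induction k with
    | zero => exact Nat.zero_le _
    | succ k ih => exact Nat.succ_le_of_lt (lt_of_le_of_lt ih (hNlt k))
  have hd1 : ∀ k j, j ≤ N k → d k j = 1 := fun k j h => h1 (N k) k j h
  have hd0 : ∀ k j, N (k + 1) ≤ j → d k j = 0 := fun k j h => h0 (N k) k j h
  have hdclose : ∀ k,
      ‖(∑ j ∈ Finset.range (N (k + 1)), ((d k j : 𝕜)) • e j) - b‖ < (1/2 : ℝ)^k :=
    fun k => hclose (N k) k
  -- the oscillating coefficient sequence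
  set a : ℕ → ℝ := fun j => ∑ i ∈ Finset.range j, (d (2*i) j - d (2*i+1) j) with hadef
  have hblockL : ∀ i j, j ≤ N (2*i) → d (2*i) j - d (2*i+1) j = 0 := by
    intro i j hj
    have m1 : (2*i : ℕ) ≤ 2*i+1 := by omega
    have e1 : d (2*i) j = 1 := hd1 (2*i) j hj
    have e2 : d (2*i+1) j = 1 := hd1 (2*i+1) j (hj.trans (hNmono.monotone m1))
    rw [e1, e2, sub_self]
  have hblockR : ∀ i j, N (2*i+2) ≤ j → d (2*i) j - d (2*i+1) j = 0 := by
    intro i j hj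
    have m1 : (2*i+1 : ℕ) ≤ 2*i+2 := by omega
    have e1 : d (2*i) j = 0 := hd0 (2*i) j (le_trans (hNmono.monotone m1) hj)
    have e2 : d (2*i+1) j = 0 := hd0 (2*i+1) j (by
      have h12 : N (2*i+1+1) = N (2*i+2) := by norm_num
      rw [h12]; exact hj)
    rw [e1, e2, sub_self]
  set D : ℕ → ℕ → B :=
    fun i p => ∑ j ∈ Finset.range p,
      (((d (2*i) j : ℝ) : 𝕜) - ((d (2*i+1) j : ℝ) : 𝕜)) • e j with hDdef
  -- partial sums decompose into blocks
  have hsum : ∀ p, ∑ j ∈ Finset.range p, ((a j : 𝕜)) • e j = ∑ i ∈ Finset.range p, D i p := by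
    intro p
    calc ∑ j ∈ Finset.range p, ((a j : 𝕜)) • e j
        = ∑ j ∈ Finset.range p,
            ∑ i ∈ Finset.range p,
              (((d (2*i) j : ℝ) : 𝕜) - ((d (2*i+1) j : ℝ) : 𝕜)) • e j := by
          apply Finset.sum_congr rfl
          intro j hj
          have haj : (a j : ℝ) = ∑ i ∈ Finset.range j, (d (2*i) j - d (2*i+1) j) := rfl
          rw [haj]
          push_cast
          rw [Finset.sum_smul]
          apply Finset.sum_subset (Finset.range_subset_range.2 (Finset.mem_range.1 hj).le)
          intro i _ hij
          have hji : j ≤ i := by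
            by_contra h
            exact hij (Finset.mem_range.2 (by omega))
          have hzero : d (2*i) j - d (2*i+1) j = 0 :=
            hblockL i j (le_trans (hji.trans (by omega)) (hNk (2*i)))
          have hzero' : d (2*i) j = d (2*i+1) j := by linarith [hzero]
          rw [hzero', sub_self, zero_smul]
      _ = ∑ i ∈ Finset.range p, D i p := Finset.sum_comm
  -- norm bound for each full block
  have hDfull : ∀ i, ‖D i (N (2*i+2))‖ ≤ (1/2 : ℝ)^(2*i) + (1/2 : ℝ)^(2*i+1) := by
    intro i
    have hsplit : D i (N (2*i+2))
        = ((∑ j ∈ Finset.range (N (2*i+1)), ((d (2*i) j : 𝕜)) • e j) - b)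
          - ((∑ j ∈ Finset.range (N (2*i+2)), ((d (2*i+1) j : 𝕜)) • e j) - b) := by
      have hextend : (∑ j ∈ Finset.range (N (2*i+1)), ((d (2*i) j : 𝕜)) • e j)
          = ∑ j ∈ Finset.range (N (2*i+2)), ((d (2*i) j : 𝕜)) • e j := by
        have hm : (2*i+1 : ℕ) ≤ 2*i+2 := by omega
        have hsub : Finset.range (N (2*i+1)) ⊆ Finset.range (N (2*i+2)) :=
          Finset.range_subset_range.2 (hNmono.monotone hm)
        apply Finset.sum_subset hsub
        intro j _ hj
        have hj' : N (2*i+1) ≤ j := le_of_not_gt (fun h => hj (Finset.mem_range.2 h))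
        have hz : d (2*i) j = 0 := hd0 (2*i) j hj'
        rw [hz]
        push_cast
        rw [zero_smul]
      rw [hextend, hDdef]
      rw [sub_sub_sub_cancel_right, ← Finset.sum_sub_distrib]
      apply Finset.sum_congr rfl
      intro j _
      rw [← sub_smul]
    rw [hsplit]
    refine le_trans (norm_sub_le _ _) ?_
    have c1 := hdclose (2*i)
    have c2 := hdclose (2*i+1)
    have e1 : N (2*i+1) = N (2*i+1) := rfl
    have e2 : N (2*i+1+1) = N (2*i+2) := by norm_num
    rw [e2] at c2
    exact add_le_add c1.le c2.le
  -- norm bound for partial blocks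
  have hDbound : ∀ i p, ‖D i p‖ ≤ Λ * ((1/2 : ℝ)^(2*i) + (1/2 : ℝ)^(2*i+1)) := by
    intro i p
    rcases le_or_gt p (N (2*i+2)) with hp | hp
    · refine le_trans
        (hΛ (fun j => (((d (2*i) j : ℝ) : 𝕜) - ((d (2*i+1) j : ℝ) : 𝕜))) p (N (2*i+2)) hp) ?_
      exact mul_le_mul_of_nonneg_left (hDfull i) hΛ0
    · have hself : D i p = D i (N (2*i+2)) := by
        symm
        apply Finset.sum_subset (Finset.range_subset_range.2 hp.le)
        intro j _ hj
        have hj' : N (2*i+2) ≤ j := le_of_not_gt (fun h => hj (Finset.mem_range.2 h))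
        have hzero : d (2*i) j - d (2*i+1) j = 0 := hblockR i j hj'
        have hzero' : d (2*i) j = d (2*i+1) j := by linarith [hzero]
        rw [hzero', sub_self, zero_smul]
      rw [hself]
      calc ‖D i (N (2*i+2))‖ ≤ (1/2 : ℝ)^(2*i) + (1/2 : ℝ)^(2*i+1) := hDfull i
        _ ≤ Λ * ((1/2 : ℝ)^(2*i) + (1/2 : ℝ)^(2*i+1)) :=
            le_mul_of_one_le_left (by positivity) hΛ1
  -- uniform bound for all partial sums
  have hbound : ∀ p, ‖∑ j ∈ Finset.range p, ((a j : 𝕜)) • e j‖ ≤ Λ * 4 := by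
    intro p
    rw [hsum p]
    calc ‖∑ i ∈ Finset.range p, D i p‖ ≤ ∑ i ∈ Finset.range p, ‖D i p‖ := norm_sum_le _ _
      _ ≤ ∑ i ∈ Finset.range p, Λ * (2 * (1/2 : ℝ)^i) := by
          apply Finset.sum_le_sum
          intro i _
          refine le_trans (hDbound i p) (mul_le_mul_of_nonneg_left ?_ hΛ0)
          have g1 : (1/2 : ℝ)^(2*i) ≤ (1/2 : ℝ)^i :=
            pow_le_pow_of_le_one (by norm_num) (by norm_num) (by omega)
          have g2 : (1/2 : ℝ)^(2*i+1) ≤ (1/2 : ℝ)^i :=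
            pow_le_pow_of_le_one (by norm_num) (by norm_num) (by omega)
          linarith
      _ = (Λ * 2) * ∑ i ∈ Finset.range p, (1/2 : ℝ)^i := by
          rw [Finset.mul_sum]
          apply Finset.sum_congr rfl
          intro i _
          ring
      _ ≤ (Λ * 2) * 2 := mul_le_mul_of_nonneg_left (sum_geometric_two_le p) (by positivity)
      _ = Λ * 4 := by ring
  -- the coefficients converge by the c.c. property
  obtain ⟨l, hl⟩ := hcoef (fun j => ((a j : 𝕜))) ⟨Λ * 4, hbound⟩
  -- but they oscillate between -1 and 0
  have hval1 : ∀ i, a (N (2*i+1)) = -1 := by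
    intro i
    have hiN : i < N (2*i+1) := lt_of_lt_of_le (by omega) (hNk (2*i+1))
    have ha' : a (N (2*i+1)) = ∑ i' ∈ Finset.range (N (2*i+1)),
        (d (2*i') (N (2*i+1)) - d (2*i'+1) (N (2*i+1))) := rfl
    rw [ha', Finset.sum_eq_single i]
    · rw [hd0 (2*i) _ le_rfl, hd1 (2*i+1) _ le_rfl]
      norm_num
    · intro i' _ hne'
      rcases lt_or_gt_of_ne hne' with h | h
      · exact hblockR i' (N (2*i+1)) (hNmono.monotone (show (2*i'+2:ℕ) ≤ 2*i+1 by omega))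
      · exact hblockL i' (N (2*i+1)) (hNmono.monotone (show (2*i+1:ℕ) ≤ 2*i' by omega))
    · intro h
      exact absurd (Finset.mem_range.2 hiN) h
  have hval0 : ∀ i, a (N (2*i+2)) = 0 := by
    intro i
    have ha' : a (N (2*i+2)) = ∑ i' ∈ Finset.range (N (2*i+2)),
        (d (2*i') (N (2*i+2)) - d (2*i'+1) (N (2*i+2))) := rfl
    rw [ha']
    apply Finset.sum_eq_zero
    intro i' _
    rcases le_or_gt i' i with h | h
    · exact hblockR i' (N (2*i+2)) (hNmono.monotone (show (2*i'+2:ℕ) ≤ 2*i+2 by omega))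
    · exact hblockL i' (N (2*i+2)) (hNmono.monotone (show (2*i+2:ℕ) ≤ 2*i' by omega))
  have key1 : Tendsto (fun i : ℕ => ((a (N (2*i+1)) : 𝕜))) atTop (𝓝 l) :=
    hl.comp ((hNmono.comp (show StrictMono fun i : ℕ => 2*i+1 by
      intro x y h; dsimp only; omega)).tendsto_atTop)
  have key0 : Tendsto (fun i : ℕ => ((a (N (2*i+2)) : 𝕜))) atTop (𝓝 l) :=
    hl.comp ((hNmono.comp (show StrictMono fun i : ℕ => 2*i+2 by
      intro x y h; dsimp only; omega)).tendsto_atTop)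
  have hl1 : l = -1 := by
    have hfun : (fun i : ℕ => ((a (N (2*i+1)) : 𝕜))) = fun _ => (-1 : 𝕜) := by
      funext i; rw [hval1 i]; norm_num
    rw [hfun] at key1
    exact tendsto_nhds_unique key1 tendsto_const_nhds
  have hl0 : l = 0 := by
    have hfun : (fun i : ℕ => ((a (N (2*i+2)) : 𝕜))) = fun _ => (0 : 𝕜) := by
      funext i; rw [hval0 i]; norm_num
    rw [hfun] at key0
    exact tendsto_nhds_unique key0 tendsto_const_nhds
  rw [hl1] at hl0
  norm_num at hl0
end
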